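/- arXiv:1312.1272 — 4 statements merged into one kernel-verified Lean document; each statement's English description precedes it below -/
import Mathlib

section
/- Let G be an abelian lattice-ordered group with an element u ≥ 0. Define, on the interval [0,u] = {x ∈ G : 0 ≤ x ≤ u}, the operations x ⊕ y := inf(u, x + y) and ¬x := u − x, with constant 0. Then ([0,u], ⊕, ¬, 0) is an MV-algebra. -/
class MVAlgebra (A : Type*) extends Zero A where
  oplus : A → A → A
  mvneg : A → A
  oplus_assoc : ∀ x y z : A, oplus x (oplus y z) = oplus (oplus x y) z
  oplus_comm : ∀ x y : A, oplus x y = oplus y x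
  oplus_zero : ∀ x : A, oplus x 0 = x
  mvneg_mvneg : ∀ x : A, mvneg (mvneg x) = x
  oplus_mvneg_zero : ∀ x : A, oplus x (mvneg 0) = mvneg 0
  lukasiewicz : ∀ x y : A,
    oplus (mvneg (oplus (mvneg x) y)) y = oplus (mvneg (oplus (mvneg y) x)) x

section Aux

variable {G : Type*} [Lattice G] [AddCommGroup G]
    [CovariantClass G G (· + ·) (· ≤ ·)] (u : G)

lemma aux_oplus_mem (hu : 0 ≤ u) {x y : G} (hx : 0 ≤ x ∧ x ≤ u) (hy : 0 ≤ y ∧ y ≤ u) :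
    0 ≤ u ⊓ (x + y) ∧ u ⊓ (x + y) ≤ u :=
  ⟨le_inf hu (add_nonneg hx.1 hy.1), inf_le_left⟩

lemma aux_mvneg_mem {x : G} (hx : 0 ≤ x ∧ x ≤ u) : 0 ≤ u - x ∧ u - x ≤ u :=
  ⟨sub_nonneg.2 hx.2, sub_le_self u hx.1⟩

lemma aux_key {x : G} (hx : 0 ≤ x) (a : G) : u ⊓ (x + (u ⊓ a)) = u ⊓ (x + a) := by
  rw [add_inf, ← inf_assoc, inf_eq_left.2 (le_add_of_nonneg_left hx)]

lemma aux_luk {x y : G} (hy : y ≤ u) :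
    u ⊓ (u - (u ⊓ (u - x + y)) + y) = u ⊓ (x ⊔ y) := by
  have h1 : u - (u ⊓ (u - x + y)) = (u - u) ⊔ (u - (u - x + y)) := sub_inf _ _ _
  rw [h1, sub_self, sub_add_eq_sub_sub, sub_sub_cancel, sup_add, zero_add,
    sub_add_cancel, sup_comm]

end Aux

/-- Let `G` be an abelian ℓ-group and `u ≥ 0`. Then the interval
`[0,u] = {x : 0 ≤ x ∧ x ≤ u}` with `x ⊕ y = inf(u, x+y)`, `¬x = u - x` and
constant `0` is an MV-algebra. -/
theorem unit_interval_is_MV_algebra (G : Type*) [Lattice G] [AddCommGroup G]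
    [CovariantClass G G (· + ·) (· ≤ ·)] (u : G) (hu : 0 ≤ u) :
    ∃ inst : MVAlgebra {x : G // 0 ≤ x ∧ x ≤ u},
      (∀ x y : {x : G // 0 ≤ x ∧ x ≤ u}, (inst.oplus x y).1 = u ⊓ (x.1 + y.1)) ∧
      (∀ x : {x : G // 0 ≤ x ∧ x ≤ u}, (inst.mvneg x).1 = u - x.1) ∧
      (inst.toZero.zero).1 = (0 : G) := by
  refine ⟨{ zero := ⟨0, le_refl 0, hu⟩
            oplus := fun x y => ⟨u ⊓ (x.1 + y.1), aux_oplus_mem u hu x.2 y.2⟩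
            mvneg := fun x => ⟨u - x.1, aux_mvneg_mem u x.2⟩
            oplus_assoc := ?_
            oplus_comm := ?_
            oplus_zero := ?_
            mvneg_mvneg := ?_
            oplus_mvneg_zero := ?_
            lukasiewicz := ?_ }, fun x y => rfl, fun x => rfl, rfl⟩
  · rintro ⟨x, hx⟩ ⟨y, hy⟩ ⟨z, hz⟩
    apply Subtype.ext
    show u ⊓ (x + u ⊓ (y + z)) = u ⊓ (u ⊓ (x + y) + z)
    rw [aux_key u hx.1, add_comm (u ⊓ (x + y)) z, aux_key u hz.1]
    congr 1
    abel
  · rintro ⟨x, hx⟩ ⟨y, hy⟩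
    exact Subtype.ext (by show u ⊓ (x + y) = u ⊓ (y + x); rw [add_comm])
  · rintro ⟨x, hx⟩
    exact Subtype.ext (by show u ⊓ (x + 0) = x; rw [add_zero, inf_eq_right.2 hx.2])
  · rintro ⟨x, hx⟩
    exact Subtype.ext (by show u - (u - x) = x; rw [sub_sub_cancel])
  · rintro ⟨x, hx⟩
    apply Subtype.ext
    show u ⊓ (x + (u - 0)) = u - 0
    rw [sub_zero, inf_eq_left.2 (le_add_of_nonneg_left hx.1)]
  · rintro ⟨x, hx⟩ ⟨y, hy⟩
    apply Subtype.ext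
    show u ⊓ (u - (u ⊓ (u - x + y)) + y) = u ⊓ (u - (u ⊓ (u - y + x)) + x)
    rw [aux_luk u hy.2, aux_luk u hx.2, sup_comm]
end

section
/- Let A be an MV-algebra and let Mₐ be the set of good sequences of A, i.e., sequences a : ℕ → A with aᵢ ⊕ aᵢ₊₁ = aᵢ for all i and aᵣ = 0 for all sufficiently large r. With the sum (a + b)ᵢ := aᵢ ⊕ (aᵢ₋₁ ⊙ b₁) ⊕ … ⊕ (a₁ ⊙ bᵢ₋₁) ⊕ bᵢ and zero the constant sequence 0, Mₐ is a commutative monoid. -/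
open MVAlgebra

/-- The derived operation `x ⊙ y := ¬(¬x ⊕ ¬y)`. -/
def MVAlgebra.odot {A : Type*} [MVAlgebra A] (x y : A) : A :=
  mvneg (oplus (mvneg x) (mvneg y))

/-- A good sequence: `aᵢ ⊕ aᵢ₊₁ = aᵢ` for all `i`, and eventually zero. -/
def Good {A : Type*} [MVAlgebra A] (a : ℕ → A) : Prop :=
  (∀ i, oplus (a i) (a (i + 1)) = a i) ∧ ∃ N, ∀ m, N ≤ m → a m = 0

/-- The sum of (good) sequences:
`(a + b)ₙ = aₙ ⊕ (aₙ₋₁ ⊙ b₀) ⊕ … ⊕ (a₀ ⊙ bₙ₋₁) ⊕ bₙ`. -/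
def addGood {A : Type*} [MVAlgebra A] (a b : ℕ → A) : ℕ → A := fun n =>
  ((List.range n).map (fun j => odot (a (n - 1 - j)) (b j))).foldr oplus
    (oplus (a n) (b n))

/-! ### Basic MV-algebra development -/

namespace MVAlgebra

section Basic

universe u

variable {A : Type u} [MVAlgebra A]

local prefix:max "∼" => mvneg

instance : Add A := ⟨oplus⟩
instance : One A := ⟨∼(0 : A)⟩
instance : Mul A := ⟨odot⟩

lemma oplus_eq_add (x y : A) : oplus x y = x + y := rfl
lemma odot_eq_mul (x y : A) : odot x y = x * y := rfl
lemma one_def : (1 : A) = ∼(0 : A) := rfl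
lemma mul_def (x y : A) : x * y = ∼(∼x + ∼y) := rfl

lemma add_assoc' (x y z : A) : x + y + z = x + (y + z) := (oplus_assoc x y z).symm
lemma add_comm' (x y : A) : x + y = y + x := oplus_comm x y
lemma add_zero' (x : A) : x + 0 = x := oplus_zero x
lemma zero_add' (x : A) : (0 : A) + x = x := by rw [add_comm']; exact add_zero' x
lemma neg_neg' (x : A) : ∼∼x = x := mvneg_mvneg x
lemma add_one' (x : A) : x + 1 = 1 := oplus_mvneg_zero x
lemma one_add' (x : A) : (1 : A) + x = 1 := by rw [add_comm']; exact add_one' x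
lemma luk (x y : A) : ∼(∼x + y) + y = ∼(∼y + x) + x := lukasiewicz x y

instance : AddCommMonoid A where
  add_assoc := add_assoc'
  add_comm := add_comm'
  add_zero := add_zero'
  zero_add := zero_add'
  nsmul := nsmulRec

lemma neg_one : ∼(1 : A) = 0 := neg_neg' 0

lemma neg_inj {x y : A} (h : ∼x = ∼y) : x = y := by
  rw [← neg_neg' x, h, neg_neg' y]

lemma neg_add_cancel' (x : A) : ∼x + x = 1 := by
  have h := luk x (1 : A)
  simp only [add_one', neg_one, zero_add'] at h
  exact h.symm

lemma add_neg_cancel' (x : A) : x + ∼x = 1 := by rw [add_comm']; exact neg_add_cancel' x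

lemma mul_comm' (x y : A) : x * y = y * x := by rw [mul_def, mul_def, add_comm']

lemma mul_assoc' (x y z : A) : x * y * z = x * (y * z) := by
  rw [mul_def x y, mul_def _ z, mul_def y z, mul_def x _, neg_neg', neg_neg', add_assoc']

lemma mul_one' (x : A) : x * 1 = x := by rw [mul_def, neg_one, add_zero', neg_neg']
lemma one_mul' (x : A) : (1:A) * x = x := by rw [mul_comm']; exact mul_one' x
lemma mul_zero' (x : A) : x * 0 = 0 := by
  rw [mul_def, ← one_def, add_one', neg_one]
lemma zero_mul' (x : A) : (0:A) * x = 0 := by rw [mul_comm']; exact mul_zero' x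
lemma mul_neg_cancel' (x : A) : x * ∼x = 0 := by
  rw [mul_def, neg_neg', neg_add_cancel', neg_one]
lemma neg_mul_cancel' (x : A) : ∼x * x = 0 := by rw [mul_comm']; exact mul_neg_cancel' x

instance : CommMonoid A where
  mul_assoc := mul_assoc'
  mul_comm := mul_comm'
  mul_one := mul_one'
  one_mul := one_mul'

lemma neg_add (x y : A) : ∼(x + y) = ∼x * ∼y := by rw [mul_def, neg_neg', neg_neg']
lemma neg_mul (x y : A) : ∼(x * y) = ∼x + ∼y := by rw [mul_def, neg_neg']

/-- `y ⊖ x ⊕ x = x ⊔ y` reformulation of Łukasiewicz axiom. -/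
lemma luk' (x y : A) : x * ∼y + y = y * ∼x + x := by
  have h := luk x y
  rw [show ∼(∼x + y) = x * ∼y by rw [mul_def, neg_neg'],
    show ∼(∼y + x) = y * ∼x by rw [mul_def, neg_neg']] at h
  exact h

/-! ### Order and lattice structure -/

lemma add_tsub {x y : A} (h : ∼x + y = 1) : x + y * ∼x = y := by
  rw [add_comm' x, luk' y x, mul_def, neg_neg', h, neg_one, zero_add']

instance : PartialOrder A where
  le x y := ∼x + y = 1
  le_refl x := neg_add_cancel' x
  le_trans x y z h1 h2 := by
    show ∼x + z = 1
    rw [← add_tsub h2, ← add_assoc', h1, one_add']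
  le_antisymm x y h1 h2 := by
    have h := luk x y
    rw [show ∼x + y = 1 from h1, show ∼y + x = 1 from h2, neg_one, zero_add', zero_add'] at h
    exact h.symm

lemma le_def {x y : A} : x ≤ y ↔ ∼x + y = 1 := Iff.rfl

@[simp] lemma mv_zero_le (x : A) : 0 ≤ x := by
  rw [le_def, ← one_def, one_add']

@[simp] lemma mv_le_one (x : A) : x ≤ 1 := add_one' (∼x)

lemma mv_le_zero {x : A} (h : x ≤ 0) : x = 0 := le_antisymm h (mv_zero_le x)
lemma mv_one_le {x : A} (h : (1:A) ≤ x) : x = 1 := le_antisymm (mv_le_one x) h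

lemma le_self_add' (x c : A) : x ≤ x + c := by
  rw [le_def, ← add_assoc', neg_add_cancel', one_add']

lemma le_add_self' (x c : A) : x ≤ c + x := by rw [add_comm']; exact le_self_add' x c

lemma le_iff_exists_add' {x y : A} : x ≤ y ↔ ∃ c, x + c = y :=
  ⟨fun h => ⟨y * ∼x, add_tsub h⟩, fun ⟨c, hc⟩ => hc ▸ le_self_add' x c⟩

lemma add_le_add' {x y u v : A} (h1 : x ≤ y) (h2 : u ≤ v) : x + u ≤ y + v := by
  obtain ⟨c, rfl⟩ := le_iff_exists_add'.1 h1
  obtain ⟨d, rfl⟩ := le_iff_exists_add'.1 h2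
  calc x + u ≤ (x + u) + (c + d) := le_self_add' _ _
    _ = (x + c) + (u + d) := by abel

lemma add_le_add_left' {u v : A} (x : A) (h : u ≤ v) : x + u ≤ x + v :=
  add_le_add' (le_refl x) h
lemma add_le_add_right' {u v : A} (h : u ≤ v) (x : A) : u + x ≤ v + x :=
  add_le_add' h (le_refl x)

instance : IsOrderedAddMonoid A where
  add_le_add_left _ _ h c := add_le_add_right' h c

lemma neg_le_neg' {x y : A} (h : x ≤ y) : ∼y ≤ ∼x := by
  rw [le_def, neg_neg', add_comm']; exact h

lemma neg_le_neg_iff {x y : A} : ∼x ≤ ∼y ↔ y ≤ x :=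
  ⟨fun h => by have := neg_le_neg' h; rwa [neg_neg', neg_neg'] at this, neg_le_neg'⟩

lemma mul_le_mul' {x y u v : A} (h1 : x ≤ y) (h2 : u ≤ v) : x * u ≤ y * v := by
  rw [mul_def, mul_def]
  exact neg_le_neg' (add_le_add' (neg_le_neg' h1) (neg_le_neg' h2))

lemma mul_le_left (x y : A) : x * y ≤ x := by
  calc x * y ≤ x * 1 := mul_le_mul' (le_refl x) (mv_le_one y)
    _ = x := mul_one' x

lemma mul_le_right (x y : A) : x * y ≤ y := by rw [mul_comm']; exact mul_le_left y x

/-- residuation -/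
lemma mul_le_iff {x y z : A} : x * y ≤ z ↔ x ≤ ∼y + z := by
  constructor
  · intro h
    have h0 : x ≤ ∼y + x * y := by
      rw [le_def, mul_def, ← add_assoc']
      exact add_neg_cancel' _
    exact le_trans h0 (add_le_add_left' _ h)
  · intro h
    have h1 : x * y ≤ (∼y + z) * y := mul_le_mul' h (le_refl y)
    have h2 : (∼y + z) * y ≤ z := by
      rw [le_def, mul_def, neg_neg', add_assoc']
      exact neg_add_cancel' _
    exact le_trans h1 h2

lemma mul_eq_zero_iff_le {x y : A} : x * y = 0 ↔ x ≤ ∼y := by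
  constructor
  · intro h
    have := mul_le_iff.1 (le_of_eq h)
    rwa [add_zero'] at this
  · intro h
    exact mv_le_zero (mul_le_iff.2 (by rwa [add_zero']))

lemma tsub_le' (x y : A) : (x + y) * ∼y ≤ x := by
  rw [mul_le_iff, neg_neg', add_comm']

/-! ### Lattice structure -/

lemma le_sup_left' (x y : A) : x ≤ x * ∼y + y := by
  rw [le_def, mul_def, neg_neg']
  have h : ∼x + (∼(∼x + y) + y) = (∼x + y) + ∼(∼x + y) := by abel
  rw [h]
  exact add_neg_cancel' _

lemma sup_formula_swap (x y : A) : x * ∼y + y = y * ∼x + x := luk' x y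

lemma mul_neg_eq_zero_of_le {x y : A} (h : x ≤ y) : x * ∼y = 0 :=
  mul_eq_zero_iff_le.2 (by rwa [neg_neg'])

lemma sup_eq_of_le {x y : A} (h : x ≤ y) : x * ∼y + y = y := by
  rw [mul_neg_eq_zero_of_le h, zero_add']

lemma sup_le' {x y z : A} (hx : x ≤ z) (hy : y ≤ z) : x * ∼y + y ≤ z := by
  calc x * ∼y + y ≤ z * ∼y + y := add_le_add_right' (mul_le_mul' hx (le_refl _)) y
    _ = y * ∼z + z := sup_formula_swap z y
    _ = z := by rw [mul_neg_eq_zero_of_le hy, zero_add']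

instance : SemilatticeSup A where
  sup x y := x * ∼y + y
  le_sup_left := le_sup_left'
  le_sup_right x y := le_add_self' y (x * ∼y)
  sup_le _ _ _ := sup_le'

lemma sup_def (x y : A) : x ⊔ y = x * ∼y + y := rfl

lemma sup_formula2 (u v : A) : u ⊔ v = u + v * ∼u := by
  rw [sup_comm, sup_def, add_comm']

lemma neg_sup (x y : A) : ∼(x ⊔ y) = (∼x + y) * ∼y := by
  rw [sup_def, neg_add, neg_mul, neg_neg']

instance : Lattice A where
  inf x y := (x + ∼y) * y
  inf_le_left x y := by
    have := tsub_le' x (∼y)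
    rwa [neg_neg'] at this
  inf_le_right x y := by
    calc (x + ∼y) * y ≤ 1 * y := mul_le_mul' (mv_le_one _) (le_refl y)
      _ = y := one_mul' y
  le_inf x y z hy hz := by
    have h : ∼y ⊔ ∼z ≤ ∼x := sup_le' (neg_le_neg' hy) (neg_le_neg' hz)
    show x ≤ (y + ∼z) * z
    apply neg_le_neg_iff.mp
    calc ∼((y + ∼z) * z) = ∼y ⊔ ∼z := by rw [neg_mul, neg_add, sup_def]
      _ ≤ ∼x := h

lemma inf_def (x y : A) : x ⊓ y = (x + ∼y) * y := rfl

lemma neg_inf (x y : A) : ∼(x ⊓ y) = ∼x * y + ∼y := by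
  rw [inf_def, neg_mul, neg_add, neg_neg']

lemma neg_inf' (x y : A) : ∼(x ⊓ y) = ∼x ⊔ ∼y := by
  rw [neg_inf, sup_def, neg_neg']

lemma neg_sup' (x y : A) : ∼(x ⊔ y) = ∼x ⊓ ∼y := by
  rw [neg_sup, inf_def, neg_neg']

/-- the formula `x ⊓ y = x * (∼x + y)` -/
lemma inf_formula (x y : A) : x ⊓ y = x * (∼x + y) := by
  rw [inf_comm, inf_def, mul_comm', add_comm']

/-- `(x + y) * ∼y = x ⊓ ∼y` -/
lemma add_mul_neg (x y : A) : (x + y) * ∼y = x ⊓ ∼y := by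
  rw [inf_def, neg_neg']

/-- `(W)`: if `∼u ≤ x` then `∼u + x * u = x`. -/
lemma w_lemma {u x : A} (h : ∼u ≤ x) : ∼u + x * u = x := by
  have h2 : ∼(∼x + ∼u) + ∼u = ∼(u + x) + x := by
    have := luk x (∼u)
    rwa [neg_neg'] at this
  have hu : u + x = 1 := by
    rw [le_def, neg_neg'] at h
    exact h
  rw [add_comm', mul_def, h2, hu, neg_one, zero_add']

/-- `(K)`: `x * (u + v) ≤ x * u + v` -/
lemma k_lemma (x u v : A) : x * (u + v) ≤ x * u + v := by
  rw [le_def, neg_mul, neg_add]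
  apply mv_one_le
  calc (1:A) = u + ∼u := (add_neg_cancel' u).symm
    _ ≤ (u ⊔ ∼x) + (∼u ⊔ v) := add_le_add' le_sup_left le_sup_left
    _ = (u * x + ∼x) + (∼u * ∼v + v) := by rw [sup_def, sup_def, neg_neg']
    _ = ∼x + ∼u * ∼v + (x * u + v) := by rw [mul_comm' u x]; abel

/-- `(I11)`: `(x ⊓ y) + y * ∼x = y` -/
lemma inf_add_tsub (x y : A) : (x ⊓ y) + y * ∼x = y := by
  have key := luk y (∼(∼y + x))
  rw [neg_neg'] at key
  have h1 : (∼y + x) + y = 1 := by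
    rw [add_comm' (∼y) x, add_assoc', add_comm' (∼y) y, add_neg_cancel', add_one']
  rw [h1, neg_one, zero_add'] at key
  calc (x ⊓ y) + y * ∼x = ∼(∼y + ∼(∼y + x)) + ∼(∼y + x) := by
        rw [inf_def, mul_def, mul_def, neg_neg', add_comm' x (∼y), add_comm' (∼(∼y + x)) (∼y)]
    _ = y := key

/-- `(I1)`: distributivity inequality `(x+y) ⊓ (x+z) ≤ x + (y ⊓ z)` -/
lemma inf_add_le (x y z : A) : (x + y) ⊓ (x + z) ≤ x + (y ⊓ z) := by
  set w := (x + y) ⊓ (x + z) with hw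
  have h1 : w ≤ w * ∼x + x := le_sup_left' w x
  have h2 : w * ∼x ≤ y ⊓ z := by
    apply le_inf
    · calc w * ∼x ≤ (x + y) * ∼x := mul_le_mul' inf_le_left (le_refl _)
        _ = (y + x) * ∼x := by rw [add_comm']
        _ ≤ y := tsub_le' y x
    · calc w * ∼x ≤ (x + z) * ∼x := mul_le_mul' inf_le_right (le_refl _)
        _ = (z + x) * ∼x := by rw [add_comm']
        _ ≤ z := tsub_le' z x
  calc w ≤ w * ∼x + x := h1
    _ ≤ (y ⊓ z) + x := add_le_add_right' h2 x
    _ = x + (y ⊓ z) := add_comm' _ _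

/-- `(I2)`: `(x * ∼y) ⊓ (y * ∼x) = 0` -/
lemma tsub_inf_tsub (x y : A) : (x * ∼y) ⊓ (y * ∼x) = 0 := by
  set d := x * ∼y with hd
  set e := y * ∼x with he
  set t := d ⊓ e with ht
  set m := x ⊔ y with hm
  have hmd : m = d + y := sup_def x y
  have hme : m = e + x := by rw [hm, sup_comm]; exact sup_def y x
  have step1 : m * t = 0 := by
    have h1 : t ≤ ∼m := by
      rw [hm, neg_sup']
      exact le_inf (le_trans inf_le_right (by rw [he]; exact mul_le_right y (∼x)))
        (le_trans inf_le_left (by rw [hd]; exact mul_le_right x (∼y)))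
    apply mv_le_zero
    calc m * t ≤ m * ∼m := mul_le_mul' (le_refl m) h1
      _ = 0 := mul_neg_cancel' m
  have step2 : m + t = m := by
    apply le_antisymm _ (le_self_add' m t)
    have h3 : m + t ≤ (m + d) ⊓ (m + e) := by
      rw [ht]
      exact le_inf (add_le_add_left' m inf_le_left) (add_le_add_left' m inf_le_right)
    have h4 : m + d = x + (d + e) := by rw [hme]; abel
    have h5 : m + e = y + (d + e) := by rw [hmd]; abel
    have h6 : (x + (d + e)) ⊓ (y + (d + e)) ≤ (x ⊓ y) + (d + e) := by
      have h := inf_add_le (d + e) x y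
      rw [add_comm' (d + e) x, add_comm' (d + e) y, add_comm' (d + e) (x ⊓ y)] at h
      exact h
    have h7 : (x ⊓ y) + (d + e) = m := by
      have hre : (x ⊓ y) + (d + e) = ((x ⊓ y) + e) + d := by abel
      rw [hre, he, inf_add_tsub x y, hmd, add_comm' d y]
    calc m + t ≤ (m + d) ⊓ (m + e) := h3
      _ = (x + (d + e)) ⊓ (y + (d + e)) := by rw [h4, h5]
      _ ≤ (x ⊓ y) + (d + e) := h6
      _ = m := h7
  have e1 : t * ∼(m * t) = (t + m) * ∼m := by
    rw [neg_mul, add_comm' (∼m) (∼t), ← inf_formula, ← add_mul_neg]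
  apply mv_le_zero
  calc t ≤ t * ∼(m * t) + m * t := le_sup_left' t (m * t)
    _ = (t + m) * ∼m + m * t := by rw [e1]
    _ = 0 := by rw [add_comm' t m, step2, mul_neg_cancel', step1, add_zero']

/-- `(B)`: `(x + y) + x * y = x + y` -/
lemma add_add_mul (x y : A) : (x + y) + x * y = x + y := by
  apply le_antisymm _ (le_self_add' _ _)
  set s := x + y with hs
  have h1 : (s + x * y) * ∼s ≤ (x * y) ⊓ (∼x * ∼y) := by
    apply le_inf
    · calc (s + x*y) * ∼s = (x*y + s) * ∼s := by rw [add_comm']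
        _ ≤ x * y := tsub_le' _ _
    · calc (s + x*y) * ∼s ≤ 1 * ∼s := mul_le_mul' (mv_le_one _) (le_refl _)
        _ = ∼s := one_mul' _
        _ = ∼x * ∼y := by rw [hs, neg_add]
  have h2 : (x * y) ⊓ (∼x * ∼y) = 0 := by
    have := tsub_inf_tsub x (∼y)
    rwa [neg_neg', mul_comm' (∼y) (∼x)] at this
  calc s + x * y ≤ (s + x*y) * ∼s + s := le_sup_left' _ s
    _ ≤ 0 + s := by
        apply add_le_add_right'
        rw [← h2]; exact h1
    _ = s := zero_add' s

/-- `(I3)`: `x ⊓ (y + z) ≤ (x ⊓ y) + z` -/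
lemma inf_add_le' (x y z : A) : x ⊓ (y + z) ≤ (x ⊓ y) + z := by
  have h1 : x ⊓ (y + z) ≤ (x + z) ⊓ (y + z) :=
    le_inf (le_trans inf_le_left (le_self_add' x z)) inf_le_right
  have h2 : (x + z) ⊓ (y + z) ≤ z + (x ⊓ y) := by
    have := inf_add_le z x y
    rwa [add_comm' z x, add_comm' z y] at this
  calc x ⊓ (y + z) ≤ (x + z) ⊓ (y + z) := h1
    _ ≤ z + (x ⊓ y) := h2
    _ = (x ⊓ y) + z := add_comm' _ _

lemma inf_add_le'' (x y z : A) : x ⊓ (y + z) ≤ (x ⊓ y) + (x ⊓ z) := by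
  have h1 : x ⊓ (y + z) ≤ x ⊓ (z + (x ⊓ y)) :=
    le_inf inf_le_left (le_trans (inf_add_le' x y z) (le_of_eq (add_comm' _ _)))
  calc x ⊓ (y + z) ≤ x ⊓ (z + (x ⊓ y)) := h1
    _ ≤ (x ⊓ z) + (x ⊓ y) := inf_add_le' x z (x ⊓ y)
    _ = (x ⊓ y) + (x ⊓ z) := add_comm' _ _

lemma inf_nsmul_eq_zero {x y : A} (h : x ⊓ y = 0) : ∀ n : ℕ, x ⊓ (n • y) = 0
  | 0 => by rw [zero_smul]; exact mv_le_zero inf_le_right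
  | (n+1) => by
    apply mv_le_zero
    rw [succ_nsmul]
    calc x ⊓ (n • y + y) ≤ (x ⊓ (n • y)) + (x ⊓ y) := inf_add_le'' x _ y
      _ = 0 := by rw [h, inf_nsmul_eq_zero h n, add_zero']

lemma nsmul_inf_nsmul_eq_zero {x y : A} (h : x ⊓ y = 0) (n m : ℕ) :
    (n • x) ⊓ (m • y) = 0 := by
  rw [inf_comm]
  apply inf_nsmul_eq_zero
  rw [inf_comm]
  exact inf_nsmul_eq_zero h m
/-! ### The key quasi-identity X2 (general MV-algebras) -/

lemma add_eq_one_iff_neg_le {y z : A} : y + z = 1 ↔ ∼y ≤ z := by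
  rw [le_def, neg_neg']

lemma x2_lemma {x y z : A} (hxy : x * y = 0) (hyz : y + z = 1) :
    (x + y) * z = x + y * z := by
  have hzy : ∼z ≤ y := by rw [le_def, neg_neg', add_comm']; exact hyz
  have hyz' : ∼y ≤ z := add_eq_one_iff_neg_le.mp hyz
  apply le_antisymm
  · calc (x + y) * z = z * (y + x) := by rw [mul_comm', add_comm']
      _ ≤ z * y + x := k_lemma z y x
      _ = x + y * z := by rw [mul_comm' z y, add_comm']
  · refine le_of_eq ?_
    have hF_le_z : x + y * z ≤ z := by
      calc x + y * z ≤ ∼y + y * z := add_le_add_right' (mul_eq_zero_iff_le.mp hxy) _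
        _ = ∼y + z * y := by rw [mul_comm' y z]
        _ = z := w_lemma hyz'
    have hE_le_z : (x + y) * z ≤ z := mul_le_right _ _
    have h1 : ∼z + (x + y) * z = x + y := w_lemma (le_trans hzy (le_add_self' y x))
    have h2 : ∼z + (x + y * z) = x + y := by
      calc ∼z + (x + y * z) = x + (∼z + y * z) := by abel
        _ = x + y := by rw [w_lemma hzy]
    calc x + y * z = (x + y * z) ⊓ z := (inf_eq_left.mpr hF_le_z).symm
      _ = ((x + y * z) + ∼z) * z := inf_def _ _
      _ = (∼z + (x + y * z)) * z := by rw [add_comm' (x + y * z) (∼z)]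
      _ = (∼z + (x + y) * z) * z := by rw [h2, h1]
      _ = (((x + y) * z) + ∼z) * z := by rw [add_comm' (∼z) _]
      _ = ((x + y) * z) ⊓ z := (inf_def _ _).symm
      _ = (x + y) * z := inf_eq_left.mpr hE_le_z

/-! ### Sums -/

lemma foldr_oplus_eq_sum (l : List A) (init : A) : l.foldr oplus init = l.sum + init := by
  induction l with
  | nil => exact (zero_add' init).symm
  | cons hd tl ih =>
    show hd + tl.foldr oplus init = _
    rw [ih, List.sum_cons, add_assoc']

lemma list_range_map_sum (f : ℕ → A) (n : ℕ) :
    ((List.range n).map f).sum = ∑ j ∈ Finset.range n, f j := by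
  induction n with
  | zero => simp
  | succ n ih =>
    rw [List.range_succ, List.map_append, List.sum_append, Finset.sum_range_succ, ih]
    simp

lemma addGood_eq_sum (a b : ℕ → A) (n : ℕ) :
    addGood a b n = (∑ j ∈ Finset.range n, a (n - 1 - j) * b j) + (a n + b n) := by
  show ((List.range n).map (fun j => a (n - 1 - j) * b j)).foldr oplus (a n + b n) = _
  rw [foldr_oplus_eq_sum, list_range_map_sum]
/-! ### Ideals and prime ideals -/

def IsIdeal (I : Set A) : Prop :=
  (0:A) ∈ I ∧ (∀ x ∈ I, ∀ y ∈ I, x + y ∈ I) ∧ ∀ x y : A, x ≤ y → y ∈ I → x ∈ I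

theorem exists_prime_ideal {a : A} (ha : a ≠ 0) :
    ∃ P : Set A, IsIdeal P ∧ a ∉ P ∧ ∀ x y : A, x * ∼y ∈ P ∨ y * ∼x ∈ P := by
  classical
  set S : Set (Set A) := {I | IsIdeal I ∧ a ∉ I} with hS
  have h0 : ({0} : Set A) ∈ S := by
    refine ⟨⟨rfl, ?_, ?_⟩, ?_⟩
    · rintro x hx y hy
      rw [Set.mem_singleton_iff] at *
      rw [hx, hy, add_zero']
    · intro x y hxy hy
      rw [Set.mem_singleton_iff] at *
      rw [hy] at hxy
      exact mv_le_zero hxy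
    · simpa using ha
  have hub : ∀ c ⊆ S, IsChain (· ⊆ ·) c → c.Nonempty → ∃ ub ∈ S, ∀ s ∈ c, s ⊆ ub := by
    rintro c hcS hchain ⟨I0, hI0⟩
    refine ⟨⋃₀ c, ⟨⟨?_, ?_, ?_⟩, ?_⟩, fun s hs => Set.subset_sUnion_of_mem hs⟩
    · exact ⟨I0, hI0, (hcS hI0).1.1⟩
    · rintro x ⟨I, hIc, hxI⟩ y ⟨J, hJc, hyJ⟩
      rcases hchain.total hIc hJc with h | h
      · exact ⟨J, hJc, (hcS hJc).1.2.1 x (h hxI) y hyJ⟩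
      · exact ⟨I, hIc, (hcS hIc).1.2.1 x hxI y (h hyJ)⟩
    · rintro x y hxy ⟨I, hIc, hyI⟩
      exact ⟨I, hIc, (hcS hIc).1.2.2 x y hxy hyI⟩
    · rintro ⟨I, hIc, haI⟩
      exact (hcS hIc).2 haI
  obtain ⟨M, -, hmax⟩ := zorn_subset_nonempty S hub _ h0
  have hM : IsIdeal M := hmax.1.1
  have haM : a ∉ M := hmax.1.2
  refine ⟨M, hM, haM, ?_⟩
  intro x y
  by_contra hcon
  push_neg at hcon
  obtain ⟨hd, he⟩ := hcon
  have hmem : ∀ u : A, u ∉ M → ∃ w ∈ M, ∃ n : ℕ, a ≤ w + n • u := by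
    intro u hu
    set E := {z : A | ∃ w ∈ M, ∃ n : ℕ, z ≤ w + n • u} with hE
    have hIdeal : IsIdeal E := by
      refine ⟨⟨0, hM.1, 0, mv_zero_le _⟩, ?_, ?_⟩
      · rintro z1 ⟨w1, hw1, n1, h1⟩ z2 ⟨w2, hw2, n2, h2⟩
        refine ⟨w1 + w2, hM.2.1 _ hw1 _ hw2, n1 + n2, ?_⟩
        calc z1 + z2 ≤ (w1 + n1 • u) + (w2 + n2 • u) := add_le_add' h1 h2
          _ = (w1 + w2) + (n1 + n2) • u := by rw [add_nsmul]; abel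
      · rintro z z' hzz' ⟨w, hw, n, h⟩
        exact ⟨w, hw, n, le_trans hzz' h⟩
    have hME : M ⊆ E := fun z hz => ⟨z, hz, 0, by rw [zero_smul, add_zero']⟩
    have huE : u ∈ E := ⟨0, hM.1, 1, by rw [one_smul, zero_add']⟩
    rcases Classical.em (a ∈ E) with haE | haE
    · exact haE
    · exfalso
      have hES : E ∈ S := ⟨hIdeal, haE⟩
      exact hu (hmax.2 hES hME huE)
  obtain ⟨w1, hw1, n, hn⟩ := hmem _ hd
  obtain ⟨w2, hw2, m, hm⟩ := hmem _ he
  have key : a ≤ w1 + w2 := by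
    have h1 : a ≤ ((w1 + w2) + n • (x * ∼y)) ⊓ ((w1 + w2) + m • (y * ∼x)) := by
      refine le_inf (le_trans hn ?_) (le_trans hm ?_)
      · exact add_le_add' (le_self_add' w1 w2) (le_refl _)
      · exact add_le_add' (le_add_self' w2 w1) (le_refl _)
    calc a ≤ _ := h1
      _ ≤ (w1 + w2) + (n • (x * ∼y) ⊓ m • (y * ∼x)) := inf_add_le _ _ _
      _ = w1 + w2 := by
          rw [nsmul_inf_nsmul_eq_zero (tsub_inf_tsub x y), add_zero']
  exact haM (hM.2.2 _ _ key (hM.2.1 _ hw1 _ hw2))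

/-! ### The distance function -/

def dd (x y : A) : A := x * ∼y + y * ∼x

lemma dd_self (x : A) : dd x x = 0 := by
  rw [dd, mul_neg_cancel', add_zero']

lemma dd_comm (x y : A) : dd x y = dd y x := add_comm' _ _

lemma tsub_triangle (x y z : A) : x * ∼z ≤ x * ∼y + y * ∼z := by
  calc x * ∼z ≤ (x * ∼y + y) * ∼z := mul_le_mul' (le_sup_left' x y) (le_refl _)
    _ = ∼z * (y + x * ∼y) := by rw [mul_comm', add_comm']
    _ ≤ ∼z * y + x * ∼y := k_lemma _ _ _
    _ = x * ∼y + y * ∼z := by rw [mul_comm' (∼z) y]; exact add_comm' _ _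

lemma dd_triangle (x y z : A) : dd x z ≤ dd x y + dd y z := by
  calc dd x z = x * ∼z + z * ∼x := rfl
    _ ≤ (x * ∼y + y * ∼z) + (z * ∼y + y * ∼x) :=
        add_le_add' (tsub_triangle x y z) (tsub_triangle z y x)
    _ = dd x y + dd y z := by rw [dd, dd]; abel

lemma tsub_add_le (x y u v : A) : (x + u) * ∼(y + v) ≤ x * ∼y + u * ∼v := by
  have step1 : (x + u) * ∼y ≤ x * ∼y + u := by
    calc (x + u) * ∼y = ∼y * (x + u) := mul_comm' _ _
      _ ≤ ∼y * x + u := k_lemma _ _ _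
      _ = x * ∼y + u := by rw [mul_comm']
  calc (x + u) * ∼(y + v) = (x + u) * (∼y * ∼v) := by rw [neg_add]
    _ = ((x + u) * ∼y) * ∼v := (mul_assoc' _ _ _).symm
    _ ≤ (x * ∼y + u) * ∼v := mul_le_mul' step1 (le_refl _)
    _ = ∼v * (u + x * ∼y) := by rw [mul_comm', add_comm']
    _ ≤ ∼v * u + x * ∼y := k_lemma _ _ _
    _ = x * ∼y + u * ∼v := by rw [mul_comm' (∼v) u]; exact add_comm' _ _

lemma dd_add_le (x y u v : A) : dd (x + u) (y + v) ≤ dd x y + dd u v := by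
  calc dd (x + u) (y + v) ≤ (x * ∼y + u * ∼v) + (y * ∼x + v * ∼u) :=
      add_le_add' (tsub_add_le x y u v) (tsub_add_le y x v u)
    _ = dd x y + dd u v := by rw [dd, dd]; abel

lemma dd_neg (x y : A) : dd (∼x) (∼y) = dd x y := by
  rw [dd, dd, neg_neg', neg_neg', mul_comm' (∼x) y, mul_comm' (∼y) x, add_comm']

lemma dd_eq_zero_iff {x y : A} : dd x y = 0 ↔ x = y := by
  constructor
  · intro h
    have h1 : x * ∼y = 0 := mv_le_zero (le_trans (le_self_add' _ _) (le_of_eq h))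
    have h2 : y * ∼x = 0 := mv_le_zero (le_trans (le_add_self' _ _) (le_of_eq h))
    have l1 := mul_eq_zero_iff_le.mp h1
    have l2 := mul_eq_zero_iff_le.mp h2
    rw [neg_neg'] at l1 l2
    exact le_antisymm l1 l2
  · rintro rfl; exact dd_self x

/-! ### Quotient MV-algebras -/

section Quotient

variable (P : Set A) (hP : IsIdeal P)

def mvSetoid : Setoid A where
  r x y := dd x y ∈ P
  iseqv := by
    constructor
    · intro x; rw [dd_self]; exact hP.1
    · intro x y h; rwa [dd_comm]
    · intro x y z h1 h2
      exact hP.2.2 _ _ (dd_triangle x y z) (hP.2.1 _ h1 _ h2)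

def MVQuot := Quotient (mvSetoid P hP)

variable {P hP}

def qmk (z : A) : MVQuot P hP := Quotient.mk (mvSetoid P hP) z

lemma qmk_eq_iff {x y : A} : (qmk x : MVQuot P hP) = qmk y ↔ dd x y ∈ P :=
  ⟨fun h => Quotient.exact h, fun h => @Quotient.sound A (mvSetoid P hP) x y h⟩

variable (P hP)

instance : MVAlgebra (MVQuot P hP) where
  zero := qmk 0
  oplus := Quotient.lift₂ (fun x y => (qmk (x + y) : MVQuot P hP))
    (by
      intro a b a' b' ha hb
      apply Quotient.sound
      show dd (a + b) (a' + b') ∈ P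
      exact hP.2.2 _ _ (dd_add_le a a' b b') (hP.2.1 _ ha _ hb))
  mvneg := Quotient.lift (fun x => (qmk (∼x) : MVQuot P hP))
    (by
      intro a a' h
      apply Quotient.sound
      show dd (∼a) (∼a') ∈ P
      rwa [dd_neg])
  oplus_assoc := by
    rintro ⟨x⟩ ⟨y⟩ ⟨z⟩
    exact congrArg qmk (add_assoc' x y z).symm
  oplus_comm := by
    rintro ⟨x⟩ ⟨y⟩
    exact congrArg qmk (add_comm' x y)
  oplus_zero := by
    rintro ⟨x⟩
    exact congrArg qmk (add_zero' x)
  mvneg_mvneg := by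
    rintro ⟨x⟩
    exact congrArg qmk (neg_neg' x)
  oplus_mvneg_zero := by
    rintro ⟨x⟩
    exact congrArg qmk (add_one' x)
  lukasiewicz := by
    rintro ⟨x⟩ ⟨y⟩
    exact congrArg qmk (luk x y)

variable {P hP}

lemma qmk_add (x y : A) : (qmk (x + y) : MVQuot P hP) = qmk x + qmk y := rfl
lemma qmk_neg (x : A) : (qmk (∼x) : MVQuot P hP) = ∼(qmk x) := rfl
lemma qmk_zero : (qmk 0 : MVQuot P hP) = 0 := rfl
lemma qmk_one : (qmk 1 : MVQuot P hP) = 1 := rfl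

lemma dd_one (z : A) : dd z 1 = ∼z := by
  rw [dd, neg_one, mul_zero', one_mul', zero_add']

lemma qmk_le_iff {x y : A} : (qmk x : MVQuot P hP) ≤ qmk y ↔ x * ∼y ∈ P := by
  rw [le_def, ← qmk_neg, ← qmk_add, ← qmk_one, qmk_eq_iff, dd_one, mul_def, neg_neg']

lemma quot_linear (hprime : ∀ x y : A, x * ∼y ∈ P ∨ y * ∼x ∈ P) :
    ∀ u v : MVQuot P hP, u ≤ v ∨ v ≤ u := by
  rintro ⟨x⟩ ⟨y⟩
  rcases hprime x y with h | h
  · exact Or.inl (qmk_le_iff.mpr h)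
  · exact Or.inr (qmk_le_iff.mpr h)

end Quotient

/-! ### The chain-transfer criterion -/

theorem eq_of_forall_chain {x y : A}
    (H : ∀ (C : Type u) [MVAlgebra C] (f : A → C),
      (∀ u v : C, u ≤ v ∨ v ≤ u) →
      (∀ a b : A, f (a + b) = f a + f b) →
      (∀ a : A, f (∼a) = ∼(f a)) → f 0 = 0 → f x = f y) : x = y := by
  by_contra hxy
  have hdd : dd x y ≠ 0 := fun h => hxy (dd_eq_zero_iff.mp h)
  obtain ⟨P, hP, haP, hprime⟩ := exists_prime_ideal hdd
  have := H (MVQuot P hP) qmk (quot_linear hprime)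
    (fun a b => qmk_add a b) (fun a => qmk_neg a) qmk_zero
  exact haP (qmk_eq_iff.mp this)
/-! ### Chains -/

section Chain

variable (lin : ∀ u v : A, u ≤ v ∨ v ≤ u)

include lin

lemma lin1 {x y : A} (h : x * y ≠ 0) : x + y = 1 := by
  rcases lin x (∼y) with hle | hle
  · exact absurd (mul_eq_zero_iff_le.mpr hle) h
  · apply mv_one_le
    calc (1:A) = ∼y + y := (neg_add_cancel' y).symm
      _ ≤ x + y := add_le_add_right' hle y

lemma good_pair {x y : A} (h : x + y = x) : y = 0 ∨ x = 1 := by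
  rcases lin y (∼x) with hle | hle
  · left
    have h1 : y ⊓ ∼x = y := inf_eq_left.mpr hle
    have h2 : y ⊓ ∼x = (y + x) * ∼x := inf_def y (∼x) |>.trans (by rw [neg_neg'])
    rw [← h1, h2, add_comm', h, mul_neg_cancel']
  · right
    apply mv_one_le
    calc (1:A) = x + ∼x := (add_neg_cancel' x).symm
      _ ≤ x + y := add_le_add_left' x hle
      _ = x := h

lemma y_lemma {x y z : A} (h : x + y = 1) : (x * y) + z ≤ x + (y * z) := by
  have hBA : ∼y ≤ x := by rw [le_def, neg_neg', add_comm']; exact h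
  have claim : ∼x * (∼y + ∼z) ≤ (∼x + ∼y) * ∼z := by
    rcases lin (∼z) (x * y) with hle | hle
    · have hyz : ∼y + ∼z ≤ x := by
        calc ∼y + ∼z ≤ ∼y + x * y := add_le_add_left' _ hle
          _ = ∼y ⊔ x := by rw [sup_formula2, neg_neg']
          _ = x := sup_eq_right.mpr hBA
      calc ∼x * (∼y + ∼z) ≤ ∼x * x := mul_le_mul' (le_refl _) hyz
        _ = 0 := neg_mul_cancel' x
        _ ≤ _ := mv_zero_le _
    · have hD : x * y + ∼z * ∼(x * y) = ∼z := add_tsub (by rw [le_def] at hle; exact hle)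
      have hsum : ∼y + ∼z = x + ∼z * ∼(x * y) := by
        calc ∼y + ∼z = ∼y + (x * y + ∼z * ∼(x * y)) := by rw [hD]
          _ = (∼y + x * y) + ∼z * ∼(x * y) := by rw [add_assoc']
          _ = (∼y ⊔ x) + ∼z * ∼(x * y) := by rw [sup_formula2, neg_neg']
          _ = x + ∼z * ∼(x * y) := by rw [sup_eq_right.mpr hBA]
      calc ∼x * (∼y + ∼z) = ∼x * (x + ∼z * ∼(x * y)) := by rw [hsum]
        _ = ∼x ⊓ (∼z * ∼(x * y)) := by rw [inf_formula, neg_neg']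
        _ ≤ ∼z * ∼(x * y) := inf_le_right
        _ = (∼x + ∼y) * ∼z := by rw [neg_mul, mul_comm']
  have goal' : ∼(x + y * z) ≤ ∼((x * y) + z) := by
    calc ∼(x + y * z) = ∼x * (∼y + ∼z) := by rw [neg_add, neg_mul]
      _ ≤ (∼x + ∼y) * ∼z := claim
      _ = ∼((x * y) + z) := by rw [neg_add, neg_mul]
  exact neg_le_neg_iff.mp goal'

lemma x3_lemma {x y z : A} (h1 : x + y = 1) (h2 : y + z = 1) :
    (x * y) + z = x + (y * z) := by
  apply le_antisymm (y_lemma lin h1)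
  have h := y_lemma lin (show z + y = 1 by rw [add_comm']; exact h2) (z := x)
  calc x + y * z = z * y + x := by rw [mul_comm']; exact add_comm' _ _
    _ ≤ z + y * x := h
    _ = x * y + z := by rw [mul_comm' y x]; exact add_comm' _ _

lemma x1_lemma {x y z : A} (h1 : x * y = 0) (h2 : y * z = 0) :
    (x + y) * z = x * (y + z) := by
  have k1 : ∼x + ∼y = 1 := by rw [← neg_mul, h1, ← one_def]
  have k2 : ∼y + ∼z = 1 := by rw [← neg_mul, h2, ← one_def]
  have h := x3_lemma lin k1 k2
  have h3 := congrArg mvneg h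
  simp only [neg_add, neg_mul, neg_neg'] at h3
  exact h3

end Chain

lemma x2m_lemma {x y z : A} (h2 : y * z = 0) (h1 : x + y = 1) :
    (x * y) + z = x * (y + z) := by
  have h := x2_lemma (x := z) (y := y) (z := x) (by rw [mul_comm']; exact h2)
    (by rw [add_comm']; exact h1)
  calc (x * y) + z = z + y * x := by rw [mul_comm' x y]; exact add_comm' _ _
    _ = (z + y) * x := h.symm
    _ = x * (y + z) := by rw [mul_comm' (z + y) x, add_comm' z y]

/-! ### Normal form of good sequences in chains -/

lemma good_nf (lin : ∀ u v : A, u ≤ v ∨ v ≤ u) {a : ℕ → A} (ha : Good a) :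
    ∃ p : ℕ, (∀ i < p, a i = 1) ∧ ∀ i, p < i → a i = 0 := by
  classical
  obtain ⟨hmono, N, hN⟩ := ha
  have hex : ∃ k, a (k + 1) = 0 := ⟨N, hN (N + 1) (Nat.le_succ N)⟩
  set p := Nat.find hex with hp
  have hzero : ∀ j : ℕ, a (p + 1 + j) = 0 := by
    intro j
    induction j with
    | zero => exact Nat.find_spec hex
    | succ j ih =>
      have h := hmono (p + 1 + j)
      rw [oplus_eq_add, ih, zero_add'] at h
      have : p + 1 + (j + 1) = p + 1 + j + 1 := by omega
      rw [this]
      exact h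
  refine ⟨p, ?_, ?_⟩
  · intro i hi
    have hne : a (i + 1) ≠ 0 := Nat.find_min hex hi
    rcases good_pair lin (show a i + a (i + 1) = a i from hmono i) with h | h
    · exact absurd h hne
    · exact h
  · intro i hi
    have : i = p + 1 + (i - p - 1) := by omega
    rw [this]
    exact hzero _

/-! ### Evaluation of `addGood` on normal forms -/

def cval (s : ℕ) (v w : A) (n : ℕ) : A :=
  if n < s then 1 else if n = s then v else if n = s + 1 then w else 0

lemma addGood_eval (a b : ℕ → A) (p q : ℕ)
    (ha1 : ∀ i < p, a i = 1) (ha0 : ∀ i, p < i → a i = 0)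
    (hb1 : ∀ i < q, b i = 1) (hb0 : ∀ i, q < i → b i = 0) (n : ℕ) :
    addGood a b n = cval (p + q) (a p + b q) (a p * b q) n := by
  classical
  have hzero : ∀ j, (q < j ∨ p < n - 1 - j) → a (n - 1 - j) * b j = 0 := by
    intro j h
    rcases h with h | h
    · rw [hb0 j h, mul_zero']
    · rw [ha0 _ h, zero_mul']
  rcases lt_trichotomy n (p + q) with hlt | heq | hgt
  · rw [cval, if_pos hlt]
    apply le_antisymm (mv_le_one _)
    rw [addGood_eq_sum]
    rcases lt_or_ge n p with h | h
    · calc (1:A) = a n := (ha1 n h).symm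
        _ ≤ a n + b n := le_self_add' _ _
        _ ≤ _ := le_add_self' _ _
    · rcases Nat.eq_zero_or_pos p with rfl | hp
      · calc (1:A) = b n := (hb1 n (by omega)).symm
          _ ≤ a n + b n := le_add_self' _ _
          _ ≤ _ := le_add_self' _ _
      · have hj : n - p ∈ Finset.range n := by
          rw [Finset.mem_range]; omega
        have hterm : a (n - 1 - (n - p)) * b (n - p) = 1 := by
          have e1 : n - 1 - (n - p) = p - 1 := by omega
          rw [e1, ha1 _ (by omega), hb1 _ (by omega), one_mul']
        calc (1:A) = a (n - 1 - (n - p)) * b (n - p) := hterm.symm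
          _ ≤ ∑ j ∈ Finset.range n, a (n - 1 - j) * b j :=
              Finset.single_le_sum (f := fun j => a (n - 1 - j) * b j)
                (fun i _ => mv_zero_le _) hj
          _ ≤ _ := le_self_add' _ _
  · subst heq
    rw [cval, if_neg (lt_irrefl _), if_pos rfl, addGood_eq_sum]
    rcases Nat.eq_zero_or_pos p with rfl | hp <;> rcases Nat.eq_zero_or_pos q with rfl | hq
    · rw [show Finset.range (0 + 0) = ∅ from rfl, Finset.sum_empty, zero_add']
    · -- p = 0, q ≥ 1
      have hsub : ({q - 1} : Finset ℕ) ⊆ Finset.range (0 + q) := by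
        intro j hj
        simp only [Finset.mem_singleton] at hj
        rw [Finset.mem_range]; omega
      have hs : ∑ j ∈ Finset.range (0 + q), a (0 + q - 1 - j) * b j
          = ∑ j ∈ ({q - 1} : Finset ℕ), a (0 + q - 1 - j) * b j := by
        refine (Finset.sum_subset hsub ?_).symm
        intro j hjr hjs
        simp only [Finset.mem_singleton] at hjs
        rw [Finset.mem_range] at hjr
        exact hzero j (Or.inr (by omega))
      rw [hs, Finset.sum_singleton]
      have e1 : 0 + q - 1 - (q - 1) = 0 := by omega
      rw [e1, hb1 (q - 1) (by omega), mul_one', ha0 (0 + q) (by omega)]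
      have e2 : 0 + q = q := by omega
      rw [e2, zero_add']
    · -- q = 0, p ≥ 1
      have hsub : ({0} : Finset ℕ) ⊆ Finset.range (p + 0) := by
        intro j hj
        simp only [Finset.mem_singleton] at hj
        rw [Finset.mem_range]; omega
      have hs : ∑ j ∈ Finset.range (p + 0), a (p + 0 - 1 - j) * b j
          = ∑ j ∈ ({0} : Finset ℕ), a (p + 0 - 1 - j) * b j := by
        refine (Finset.sum_subset hsub ?_).symm
        intro j hjr hjs
        simp only [Finset.mem_singleton] at hjs
        exact hzero j (Or.inl (by omega))
      rw [hs, Finset.sum_singleton]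
      have e1 : p + 0 - 1 - 0 = p - 1 := by omega
      rw [e1, ha1 (p - 1) (by omega), one_mul', hb0 (p + 0) (by omega)]
      have e2 : p + 0 = p := by omega
      rw [e2, add_zero']
      exact add_comm' _ _
    · -- p ≥ 1, q ≥ 1
      have hne : q - 1 ≠ q := by omega
      have hsub : ({q - 1, q} : Finset ℕ) ⊆ Finset.range (p + q) := by
        intro j hj
        simp only [Finset.mem_insert, Finset.mem_singleton] at hj
        rw [Finset.mem_range]; omega
      have hs : ∑ j ∈ Finset.range (p + q), a (p + q - 1 - j) * b j
          = ∑ j ∈ ({q - 1, q} : Finset ℕ), a (p + q - 1 - j) * b j := by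
        refine (Finset.sum_subset hsub ?_).symm
        intro j hjr hjs
        simp only [Finset.mem_insert, Finset.mem_singleton] at hjs
        push_neg at hjs
        rw [Finset.mem_range] at hjr
        rcases lt_or_ge j q with hjq | hjq
        · exact hzero j (Or.inr (by omega))
        · exact hzero j (Or.inl (by omega))
      rw [hs, Finset.sum_pair hne]
      have e1 : p + q - 1 - (q - 1) = p := by omega
      have e2 : p + q - 1 - q = p - 1 := by omega
      rw [e1, e2, hb1 (q - 1) (by omega), mul_one', ha1 (p - 1) (by omega), one_mul',
        ha0 (p + q) (by omega), hb0 (p + q) (by omega), add_zero', add_zero']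
  · by_cases hn1 : n = p + q + 1
    · rw [cval, if_neg (by omega), if_neg (by omega), if_pos hn1, addGood_eq_sum]
      have hsub : ({q} : Finset ℕ) ⊆ Finset.range n := by
        intro j hj
        simp only [Finset.mem_singleton] at hj
        rw [Finset.mem_range]; omega
      have hs : ∑ j ∈ Finset.range n, a (n - 1 - j) * b j
          = ∑ j ∈ ({q} : Finset ℕ), a (n - 1 - j) * b j := by
        refine (Finset.sum_subset hsub ?_).symm
        intro j hjr hjs
        simp only [Finset.mem_singleton] at hjs
        rw [Finset.mem_range] at hjr
        rcases lt_or_ge j q with hjq | hjq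
        · exact hzero j (Or.inr (by omega))
        · exact hzero j (Or.inl (by omega))
      rw [hs, Finset.sum_singleton]
      have e1 : n - 1 - q = p := by omega
      rw [e1, ha0 n (by omega), hb0 n (by omega), add_zero', add_zero']
    · rw [cval, if_neg (by omega), if_neg (by omega), if_neg hn1, addGood_eq_sum]
      have hsum0 : ∑ j ∈ Finset.range n, a (n - 1 - j) * b j = 0 := by
        apply Finset.sum_eq_zero
        intro j hj
        rcases lt_or_ge j q with hjq | hjq
        · exact hzero j (Or.inr (by omega))
        · rcases eq_or_lt_of_le hjq with heq | h
          · exact hzero j (Or.inr (by omega))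
          · exact hzero j (Or.inl h)
      rw [hsum0, ha0 n (by omega), hb0 n (by omega), add_zero', add_zero']
/-! ### Goodness and associativity in chains -/

lemma cval_congr {s s' : ℕ} {v v' w w' : A} (hs : s = s') (hv : v = v') (hw : w = w')
    (n : ℕ) : cval s v w n = cval s' v' w' n := by
  subst hs; subst hv; subst hw; rfl

lemma cval_succ_shift {s : ℕ} {v w v' w' : A} (hv : v = 1) (hww : w = v') (hw' : w' = 0)
    (n : ℕ) : cval s v w n = cval (s + 1) v' w' n := by
  unfold cval
  split_ifs <;> first | rfl | (exfalso; omega) | exact hv | exact hww | exact hw'.symm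

section Chain2

lemma addGood_val0 (a b : ℕ → A) {p q : ℕ}
    (ha1 : ∀ i < p, a i = 1) (ha0 : ∀ i, p < i → a i = 0)
    (hb1 : ∀ i < q, b i = 1) (hb0 : ∀ i, q < i → b i = 0) :
    addGood a b (p + q) = a p + b q := by
  rw [addGood_eval a b p q ha1 ha0 hb1 hb0, cval, if_neg (by omega), if_pos rfl]

lemma addGood_val1 (a b : ℕ → A) {p q : ℕ}
    (ha1 : ∀ i < p, a i = 1) (ha0 : ∀ i, p < i → a i = 0)
    (hb1 : ∀ i < q, b i = 1) (hb0 : ∀ i, q < i → b i = 0) :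
    addGood a b (p + q + 1) = a p * b q := by
  rw [addGood_eval a b p q ha1 ha0 hb1 hb0, cval, if_neg (by omega), if_neg (by omega),
    if_pos rfl]

lemma addGood_nf0 {a b : ℕ → A} {p q : ℕ}
    (ha1 : ∀ i < p, a i = 1) (ha0 : ∀ i, p < i → a i = 0)
    (hb1 : ∀ i < q, b i = 1) (hb0 : ∀ i, q < i → b i = 0)
    (e : a p * b q = 0) :
    (∀ i < p + q, addGood a b i = 1) ∧ (∀ i, p + q < i → addGood a b i = 0) := by
  constructor
  · intro i hi
    rw [addGood_eval a b p q ha1 ha0 hb1 hb0, cval, if_pos hi]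
  · intro i hi
    rw [addGood_eval a b p q ha1 ha0 hb1 hb0, cval, if_neg (by omega), if_neg (by omega)]
    by_cases h2 : i = p + q + 1
    · rw [if_pos h2, e]
    · rw [if_neg h2]


variable (lin : ∀ u v : A, u ≤ v ∨ v ≤ u)

include lin

lemma chain_addGood_mono {a b : ℕ → A} (ha : Good a) (hb : Good b) (n : ℕ) :
    addGood a b n + addGood a b (n + 1) = addGood a b n := by
  obtain ⟨p, hp1, hp0⟩ := good_nf lin ha
  obtain ⟨q, hq1, hq0⟩ := good_nf lin hb
  rw [addGood_eval a b p q hp1 hp0 hq1 hq0 n, addGood_eval a b p q hp1 hp0 hq1 hq0 (n + 1)]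
  unfold cval
  split_ifs <;>
    first
      | (exfalso; omega)
      | rw [one_add']
      | exact add_add_mul _ _
      | exact add_zero' _

lemma addGood_nf1 {a b : ℕ → A} {p q : ℕ}
    (ha1 : ∀ i < p, a i = 1) (ha0 : ∀ i, p < i → a i = 0)
    (hb1 : ∀ i < q, b i = 1) (hb0 : ∀ i, q < i → b i = 0)
    (e : a p * b q ≠ 0) :
    (∀ i < p + q + 1, addGood a b i = 1) ∧ (∀ i, p + q + 1 < i → addGood a b i = 0) := by
  constructor
  · intro i hi
    rw [addGood_eval a b p q ha1 ha0 hb1 hb0, cval]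
    by_cases h1 : i < p + q
    · rw [if_pos h1]
    · rw [if_neg h1, if_pos (by omega), lin1 lin e]
  · intro i hi
    rw [addGood_eval a b p q ha1 ha0 hb1 hb0, cval, if_neg (by omega), if_neg (by omega),
      if_neg (by omega)]

lemma chain_assoc {a b c : ℕ → A} (ha : Good a) (hb : Good b) (hc : Good c) (n : ℕ) :
    addGood (addGood a b) c n = addGood a (addGood b c) n := by
  obtain ⟨p, hp1, hp0⟩ := good_nf lin ha
  obtain ⟨q, hq1, hq0⟩ := good_nf lin hb
  obtain ⟨r, hr1, hr0⟩ := good_nf lin hc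
  by_cases e1 : a p * b q = 0 <;> by_cases e2 : b q * c r = 0
  · -- no carries
    obtain ⟨gab1, gab0⟩ := addGood_nf0 hp1 hp0 hq1 hq0 e1
    obtain ⟨gbc1, gbc0⟩ := addGood_nf0 hq1 hq0 hr1 hr0 e2
    have L := addGood_eval (addGood a b) c (p + q) r gab1 gab0 hr1 hr0 n
    rw [addGood_val0 a b hp1 hp0 hq1 hq0] at L
    have R := addGood_eval a (addGood b c) p (q + r) hp1 hp0 gbc1 gbc0 n
    rw [addGood_val0 b c hq1 hq0 hr1 hr0] at R
    rw [L, R]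
    exact cval_congr (by omega) (add_assoc' _ _ _) (x1_lemma lin e1 e2) n
  · -- carry in b + c only
    obtain ⟨gab1, gab0⟩ := addGood_nf0 hp1 hp0 hq1 hq0 e1
    obtain ⟨gbc1, gbc0⟩ := addGood_nf1 lin hq1 hq0 hr1 hr0 e2
    have L := addGood_eval (addGood a b) c (p + q) r gab1 gab0 hr1 hr0 n
    rw [addGood_val0 a b hp1 hp0 hq1 hq0] at L
    have R := addGood_eval a (addGood b c) p (q + r + 1) hp1 hp0 gbc1 gbc0 n
    rw [addGood_val1 b c hq1 hq0 hr1 hr0] at R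
    rw [L, R]
    have hbc1 : b q + c r = 1 := lin1 lin e2
    calc cval (p + q + r) (a p + b q + c r) ((a p + b q) * c r) n
        = cval (p + q + r + 1) (a p + b q * c r) (a p * (b q * c r)) n := by
          apply cval_succ_shift
          · rw [add_assoc', hbc1, add_one']
          · exact x2_lemma e1 hbc1
          · rw [← mul_assoc', e1, zero_mul']
      _ = cval (p + (q + r + 1)) (a p + b q * c r) (a p * (b q * c r)) n :=
          cval_congr (by omega) rfl rfl n
  · -- carry in a + b only
    obtain ⟨gab1, gab0⟩ := addGood_nf1 lin hp1 hp0 hq1 hq0 e1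
    obtain ⟨gbc1, gbc0⟩ := addGood_nf0 hq1 hq0 hr1 hr0 e2
    have L := addGood_eval (addGood a b) c (p + q + 1) r gab1 gab0 hr1 hr0 n
    rw [addGood_val1 a b hp1 hp0 hq1 hq0] at L
    have R := addGood_eval a (addGood b c) p (q + r) hp1 hp0 gbc1 gbc0 n
    rw [addGood_val0 b c hq1 hq0 hr1 hr0] at R
    rw [L, R]
    have hab1 : a p + b q = 1 := lin1 lin e1
    calc cval (p + q + 1 + r) (a p * b q + c r) (a p * b q * c r) n
        = cval (p + q + r + 1) (a p * b q + c r) (a p * b q * c r) n :=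
          cval_congr (by omega) rfl rfl n
      _ = cval (p + q + r) (a p + (b q + c r)) (a p * (b q + c r)) n := by
          refine (cval_succ_shift ?_ ?_ ?_ n).symm
          · rw [← add_assoc', hab1, one_add']
          · exact (x2m_lemma e2 hab1).symm
          · rw [mul_assoc', e2, mul_zero']
      _ = cval (p + (q + r)) (a p + (b q + c r)) (a p * (b q + c r)) n :=
          cval_congr (by omega) rfl rfl n
  · -- both carries
    obtain ⟨gab1, gab0⟩ := addGood_nf1 lin hp1 hp0 hq1 hq0 e1
    obtain ⟨gbc1, gbc0⟩ := addGood_nf1 lin hq1 hq0 hr1 hr0 e2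
    have L := addGood_eval (addGood a b) c (p + q + 1) r gab1 gab0 hr1 hr0 n
    rw [addGood_val1 a b hp1 hp0 hq1 hq0] at L
    have R := addGood_eval a (addGood b c) p (q + r + 1) hp1 hp0 gbc1 gbc0 n
    rw [addGood_val1 b c hq1 hq0 hr1 hr0] at R
    rw [L, R]
    exact cval_congr (by omega)
      (x3_lemma lin (lin1 lin e1) (lin1 lin e2)) (mul_assoc' _ _ _) n

end Chain2
/-! ### Homomorphisms preserve everything -/

section Hom

variable {B : Type*} [MVAlgebra B] {f : A → B}
  (hadd : ∀ x y : A, f (x + y) = f x + f y)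
  (hneg : ∀ x : A, f (∼x) = ∼(f x))
  (hzero : f 0 = 0)

include hadd hneg hzero

lemma hom_mul (x y : A) : f (x * y) = f x * f y := by
  rw [mul_def, hneg, hadd, hneg, hneg, mul_def]

lemma hom_sum (s : Finset ℕ) (g : ℕ → A) : f (∑ j ∈ s, g j) = ∑ j ∈ s, f (g j) := by
  classical
  induction s using Finset.induction_on with
  | empty => simpa using hzero
  | insert _ _ hx ih =>
    rw [Finset.sum_insert hx, Finset.sum_insert hx, hadd, ih]

lemma hom_addGood (a b : ℕ → A) (n : ℕ) :
    f (addGood a b n) = addGood (f ∘ a) (f ∘ b) n := by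
  rw [addGood_eq_sum, addGood_eq_sum, hadd, hadd, hom_sum hadd hneg hzero]
  congr 1
  apply Finset.sum_congr rfl
  intro j _
  exact hom_mul hadd hneg hzero _ _

lemma hom_addGood' (a b : ℕ → A) : f ∘ (addGood a b) = addGood (f ∘ a) (f ∘ b) :=
  funext fun n => hom_addGood hadd hneg hzero a b n

lemma hom_good {a : ℕ → A} (ha : Good a) : Good (f ∘ a) := by
  obtain ⟨hmono, N, hN⟩ := ha
  constructor
  · intro i
    show f (a i) + f (a (i + 1)) = f (a i)
    rw [← hadd]
    exact congrArg f (hmono i)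
  · exact ⟨N, fun m hm => by show f (a m) = 0; rw [hN m hm, hzero]⟩

end Hom

/-! ### Direct facts about `addGood` -/

lemma addGood_comm (a b : ℕ → A) : addGood a b = addGood b a := by
  funext n
  rw [addGood_eq_sum, addGood_eq_sum]
  have hsum : ∑ j ∈ Finset.range n, a (n - 1 - j) * b j
      = ∑ j ∈ Finset.range n, b (n - 1 - j) * a j := by
    calc ∑ j ∈ Finset.range n, a (n - 1 - j) * b j
        = ∑ j ∈ Finset.range n, (fun k => b (n - 1 - k) * a k) (n - 1 - j) := by
          apply Finset.sum_congr rfl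
          intro j hj
          rw [Finset.mem_range] at hj
          have e : n - 1 - (n - 1 - j) = j := by omega
          show a (n - 1 - j) * b j = b (n - 1 - (n - 1 - j)) * a (n - 1 - j)
          rw [e, mul_comm']
      _ = ∑ j ∈ Finset.range n, b (n - 1 - j) * a j := by
          simpa using Finset.sum_range_reflect (fun k => b (n - 1 - k) * a k) n
  rw [hsum, add_comm' (a n) (b n)]

lemma addGood_zero_right (a : ℕ → A) : addGood a (fun _ => 0) = a := by
  funext n
  rw [addGood_eq_sum]
  have hs : ∑ j ∈ Finset.range n, a (n - 1 - j) * (0:A) = 0 :=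
    Finset.sum_eq_zero fun j _ => mul_zero' _
  show (∑ j ∈ Finset.range n, a (n - 1 - j) * (0:A)) + (a n + 0) = a n
  rw [hs, zero_add', add_zero']

lemma addGood_vanish {a b : ℕ → A} (ha : Good a) (hb : Good b) :
    ∃ N, ∀ m, N ≤ m → addGood a b m = 0 := by
  obtain ⟨-, Na, hNa⟩ := ha
  obtain ⟨-, Nb, hNb⟩ := hb
  refine ⟨Na + Nb + 1, fun m hm => ?_⟩
  rw [addGood_eq_sum]
  have hs : ∑ j ∈ Finset.range m, a (m - 1 - j) * b j = 0 := by
    apply Finset.sum_eq_zero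
    intro j hj
    rcases le_or_gt Nb j with h | h
    · rw [hNb j h, mul_zero']
    · rw [hNa (m - 1 - j) (by omega), zero_mul']
  rw [hs, hNa m (by omega), hNb m (by omega), zero_add', add_zero']

end Basic

end MVAlgebra

/-! ### The main theorem -/

/-- The good sequences of an MV-algebra, with the sum above and the constant zero
sequence, form a commutative monoid. -/
theorem good_sequences_comm_monoid (A : Type*) [MVAlgebra A] :
    Good (fun _ : ℕ => (0 : A)) ∧
    (∀ a b : ℕ → A, Good a → Good b → Good (addGood a b)) ∧
    (∀ a b c : ℕ → A, Good a → Good b → Good c →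
      addGood (addGood a b) c = addGood a (addGood b c)) ∧
    (∀ a b : ℕ → A, Good a → Good b → addGood a b = addGood b a) ∧
    (∀ a : ℕ → A, Good a →
      addGood a (fun _ => 0) = a ∧ addGood (fun _ => 0) a = a) := by
  refine ⟨⟨fun i => add_zero' 0, 0, fun m _ => rfl⟩, ?_, ?_, ?_, ?_⟩
  · -- closure
    intro a b ha hb
    constructor
    · intro i
      apply eq_of_forall_chain
      intro C _ f lin hadd hneg hzero
      have hfa := hom_good hadd hneg hzero ha
      have hfb := hom_good hadd hneg hzero hb
      show f (addGood a b i + addGood a b (i + 1)) = f (addGood a b i)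
      rw [hadd, hom_addGood hadd hneg hzero, hom_addGood hadd hneg hzero]
      exact chain_addGood_mono lin hfa hfb i
    · exact addGood_vanish ha hb
  · -- associativity
    intro a b c ha hb hc
    funext n
    apply eq_of_forall_chain
    intro C _ f lin hadd hneg hzero
    have hfa := hom_good hadd hneg hzero ha
    have hfb := hom_good hadd hneg hzero hb
    have hfc := hom_good hadd hneg hzero hc
    rw [hom_addGood hadd hneg hzero, hom_addGood hadd hneg hzero,
      hom_addGood' hadd hneg hzero, hom_addGood' hadd hneg hzero]
    exact chain_assoc lin hfa hfb hfc n
  · -- commutativity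
    intro a b _ _
    exact addGood_comm a b
  · -- units
    intro a _
    refine ⟨addGood_zero_right a, ?_⟩
    rw [addGood_comm]
    exact addGood_zero_right a
end

section
/- Let A be an MV-algebra and let a, b be good sequences of A. Then the componentwise infimum (inf(a₁,b₁), inf(a₂,b₂), …) and the componentwise supremum (sup(a₁,b₁), sup(a₂,b₂), …) are again good sequences, and they are respectively the infimum and the supremum of a and b in the partial order defined by a ≤ b iff aᵢ ≤ bᵢ for all i. -/
open MVAlgebra

/-- The natural order of an MV-algebra: `x ≤ y` iff `¬x ⊕ y = ¬0`. -/
def MVLe {A : Type*} [MVAlgebra A] (x y : A) : Prop :=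
  oplus (mvneg x) y = mvneg 0

/-- The lattice infimum for the natural order: `inf(x,y) = x ⊙ (¬x ⊕ y)`. -/
def MVInf {A : Type*} [MVAlgebra A] (x y : A) : A := odot x (oplus (mvneg x) y)

/-- The lattice supremum for the natural order: `sup(x,y) = (x ⊙ ¬y) ⊕ y`. -/
def MVSup {A : Type*} [MVAlgebra A] (x y : A) : A := oplus (odot x (mvneg y)) y

namespace MVAux
open MVAlgebra

variable {A : Type*} [MVAlgebra A]

lemma zero_oplus (x : A) : oplus 0 x = x := by rw [oplus_comm, oplus_zero]

lemma one_oplus (x : A) : oplus (mvneg 0) x = mvneg 0 := by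
  rw [oplus_comm, oplus_mvneg_zero]

lemma neg_one : mvneg (mvneg (0:A)) = 0 := mvneg_mvneg 0

lemma neg_oplus_self (x : A) : oplus (mvneg x) x = mvneg 0 := by
  have h := lukasiewicz x (mvneg (0:A))
  rw [oplus_mvneg_zero, neg_one, zero_oplus] at h
  exact h.symm

lemma self_oplus_neg (x : A) : oplus x (mvneg x) = mvneg 0 := by
  rw [oplus_comm, neg_oplus_self]

lemma le_refl (x : A) : MVLe x x := neg_oplus_self x

lemma zero_le (x : A) : MVLe 0 x := by
  show oplus (mvneg 0) x = mvneg 0; exact one_oplus x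

lemma le_antisymm {x y : A} (hxy : MVLe x y) (hyx : MVLe y x) : x = y := by
  have hxy' : oplus (mvneg x) y = mvneg 0 := hxy
  have hyx' : oplus (mvneg y) x = mvneg 0 := hyx
  have h := lukasiewicz x y
  rw [hxy', hyx', neg_one, zero_oplus, zero_oplus] at h
  exact h.symm

lemma sup_comm (x y : A) : MVSup x y = MVSup y x := by
  unfold MVSup odot
  rw [mvneg_mvneg, mvneg_mvneg]
  exact lukasiewicz x y

lemma le_sup_right (x y : A) : MVLe y (MVSup x y) := by
  show oplus (mvneg y) (oplus (odot x (mvneg y)) y) = mvneg 0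
  rw [oplus_assoc, oplus_comm (mvneg y) (odot x (mvneg y)), ← oplus_assoc,
    neg_oplus_self, oplus_mvneg_zero]

lemma le_sup_left (x y : A) : MVLe x (MVSup x y) := by
  rw [sup_comm]; exact le_sup_right y x

lemma le_oplus_right (x t : A) : MVLe x (oplus x t) := by
  show oplus (mvneg x) (oplus x t) = mvneg 0
  rw [oplus_assoc, neg_oplus_self, one_oplus]

lemma sup_eq_of_le {x y : A} (h : MVLe x y) : MVSup x y = y := by
  have h' : oplus (mvneg x) y = mvneg 0 := h
  unfold MVSup odot
  rw [mvneg_mvneg, h', neg_one, zero_oplus]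

lemma le_exists {x y : A} (h : MVLe x y) : ∃ t, y = oplus x t := by
  refine ⟨odot y (mvneg x), ?_⟩
  have hs : MVSup y x = y := by rw [sup_comm]; exact sup_eq_of_le h
  conv_lhs => rw [← hs]
  unfold MVSup
  rw [oplus_comm]

lemma le_trans {x y z : A} (h1 : MVLe x y) (h2 : MVLe y z) : MVLe x z := by
  obtain ⟨t1, ht1⟩ := le_exists h1
  obtain ⟨t2, ht2⟩ := le_exists h2
  rw [ht2, ht1, ← oplus_assoc]
  exact le_oplus_right x (oplus t1 t2)

lemma oplus_le_oplus_left {x y : A} (h : MVLe x y) (z : A) :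
    MVLe (oplus z x) (oplus z y) := by
  obtain ⟨t, ht⟩ := le_exists h
  rw [ht, oplus_assoc]
  exact le_oplus_right (oplus z x) t

lemma oplus_le_oplus_right {x y : A} (h : MVLe x y) (z : A) :
    MVLe (oplus x z) (oplus y z) := by
  rw [oplus_comm x z, oplus_comm y z]
  exact oplus_le_oplus_left h z

lemma oplus_le_oplus {a b u v : A} (h1 : MVLe a b) (h2 : MVLe u v) :
    MVLe (oplus a u) (oplus b v) :=
  le_trans (oplus_le_oplus_right h1 u) (oplus_le_oplus_left h2 b)

lemma neg_le_neg {x y : A} (h : MVLe x y) : MVLe (mvneg y) (mvneg x) := by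
  show oplus (mvneg (mvneg y)) (mvneg x) = mvneg 0
  rw [mvneg_mvneg, oplus_comm]
  exact h

lemma odot_comm (x y : A) : odot x y = odot y x := by unfold odot; rw [oplus_comm]

lemma odot_le_left (x y : A) : MVLe (odot x y) x := by
  show oplus (mvneg (odot x y)) x = mvneg 0
  unfold odot
  rw [mvneg_mvneg, oplus_comm (mvneg x) (mvneg y), ← oplus_assoc, neg_oplus_self,
    oplus_mvneg_zero]

lemma odot_le_right (x y : A) : MVLe (odot x y) y := by
  rw [odot_comm]; exact odot_le_left y x

lemma odot_le_odot_right {x y : A} (h : MVLe x y) (z : A) :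
    MVLe (odot x z) (odot y z) := by
  have h1 := oplus_le_oplus_right (neg_le_neg h) (mvneg z)
  have h2 := neg_le_neg h1
  exact h2

lemma inf_neg_sup (x y : A) : MVInf x y = mvneg (MVSup (mvneg x) (mvneg y)) := by
  have h := lukasiewicz (mvneg x) (mvneg y)
  rw [mvneg_mvneg, mvneg_mvneg] at h
  unfold MVInf MVSup odot
  rw [mvneg_mvneg, mvneg_mvneg, h, oplus_comm y (mvneg x),
    oplus_comm (mvneg (oplus (mvneg x) y)) (mvneg x)]

lemma inf_comm (x y : A) : MVInf x y = MVInf y x := by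
  rw [inf_neg_sup, inf_neg_sup, sup_comm]

lemma inf_le_left (x y : A) : MVLe (MVInf x y) x := by
  have h := neg_le_neg (le_sup_left (mvneg x) (mvneg y))
  rw [mvneg_mvneg] at h
  rw [inf_neg_sup]
  exact h

lemma inf_le_right (x y : A) : MVLe (MVInf x y) y := by
  rw [inf_comm]; exact inf_le_left y x

lemma sup_le {x y z : A} (h1 : MVLe x z) (h2 : MVLe y z) : MVLe (MVSup x y) z := by
  have m : MVLe (MVSup x y) (MVSup z y) :=
    oplus_le_oplus_right (odot_le_odot_right h1 (mvneg y)) y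
  have e : MVSup z y = z := by rw [sup_comm]; exact sup_eq_of_le h2
  rw [e] at m
  exact m

lemma le_inf {x y z : A} (h1 : MVLe z x) (h2 : MVLe z y) : MVLe z (MVInf x y) := by
  have h := sup_le (neg_le_neg h1) (neg_le_neg h2)
  have h' := neg_le_neg h
  rw [mvneg_mvneg] at h'
  rw [inf_neg_sup]
  exact h'

lemma le_zero_eq {w : A} (h : MVLe w 0) : w = 0 := le_antisymm h (zero_le w)

lemma neg_odot (x y : A) : mvneg (odot x y) = oplus (mvneg x) (mvneg y) := by
  unfold odot; rw [mvneg_mvneg]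

lemma odot_eq_zero {x y : A} (h : odot x y = 0) : MVLe x (mvneg y) := by
  have h' := congrArg mvneg h
  rw [neg_odot] at h'
  exact h'

lemma odot_self_neg (x : A) : odot x (mvneg x) = 0 := by
  unfold odot
  rw [mvneg_mvneg, neg_oplus_self, neg_one]

lemma res_mp {a b c : A} (h : MVLe (odot a b) c) : MVLe a (oplus (mvneg b) c) := by
  have h1 := le_sup_left a (mvneg b)
  have e : MVSup a (mvneg b) = oplus (odot a b) (mvneg b) := by
    unfold MVSup; rw [mvneg_mvneg]
  rw [e] at h1
  have h2 := oplus_le_oplus_right h (mvneg b)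
  have h3 := le_trans h1 h2
  rw [oplus_comm] at h3
  exact h3

lemma res_mpr {a b c : A} (h : MVLe a (oplus (mvneg b) c)) : MVLe (odot a b) c := by
  have h1 := odot_le_odot_right h b
  have e : odot (oplus (mvneg b) c) b = MVInf b c := by rw [odot_comm]; rfl
  rw [e] at h1
  exact le_trans h1 (inf_le_right b c)

lemma riesz (p q r : A) : MVLe (odot p (oplus q r)) (oplus (odot p q) r) := by
  apply res_mpr
  have h1 := le_sup_left p (mvneg q)
  have e : MVSup p (mvneg q) = oplus (odot p q) (mvneg q) := by
    unfold MVSup; rw [mvneg_mvneg]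
  rw [e] at h1
  have h2 : MVLe (mvneg q) (MVSup (mvneg q) r) := le_sup_left (mvneg q) r
  have h3 := le_trans h1 (oplus_le_oplus_left h2 (odot p q))
  have e2 : MVSup (mvneg q) r = oplus (mvneg (oplus q r)) r := by
    unfold MVSup odot; rw [mvneg_mvneg, mvneg_mvneg]
  rw [e2] at h3
  rw [oplus_assoc, oplus_comm (odot p q) (mvneg (oplus q r)), ← oplus_assoc] at h3
  exact h3

lemma oplus_odot_neg_le (c d : A) : MVLe (odot (oplus c d) (mvneg c)) d := by
  apply res_mpr
  rw [mvneg_mvneg]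
  exact le_refl (oplus c d)

lemma inf_zero_le {x y : A} (h : MVInf x y = 0) (v : A) :
    MVLe (MVInf x v) (odot (mvneg y) v) := by
  set m := MVInf x v with hm
  have t1 : MVLe (odot m (mvneg v)) (odot v (mvneg v)) :=
    odot_le_odot_right (inf_le_right x v) (mvneg v)
  rw [odot_self_neg] at t1
  have z1 := le_zero_eq t1
  have hr := riesz m (mvneg v) y
  rw [z1, zero_oplus] at hr
  have h2 : MVLe (odot m (oplus (mvneg v) y)) x :=
    le_trans (odot_le_left m (oplus (mvneg v) y)) (inf_le_left x v)
  have h3 := le_inf h2 hr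
  rw [h] at h3
  have h4 := le_zero_eq h3
  have h5 := odot_eq_zero h4
  have e : mvneg (oplus (mvneg v) y) = odot (mvneg y) v := by
    unfold odot; rw [mvneg_mvneg, oplus_comm]
  rw [e] at h5
  exact h5

lemma absorb {x x' t : A} (hx : oplus x x' = x) (ht : MVLe t x') :
    oplus x t = x := by
  refine le_antisymm ?_ (le_oplus_right x t)
  have h := oplus_le_oplus_left ht x
  rw [hx] at h
  exact h

lemma good_step_le {x x' : A} (hx : oplus x x' = x) (c : A) :
    MVLe (oplus c x') (MVSup x c) := by
  have h0 : MVInf x' (mvneg x) = 0 := by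
    rw [inf_comm]
    unfold MVInf odot
    rw [mvneg_mvneg, hx, self_oplus_neg, neg_one]
  have s1 : MVLe (oplus c x') (MVSup (oplus c x') c) := le_sup_left _ _
  have s2 : MVLe (odot (oplus c x') (mvneg c)) (MVInf x' (mvneg c)) :=
    le_inf (oplus_odot_neg_le c x') (odot_le_right _ _)
  have s3 := inf_zero_le h0 (mvneg c)
  rw [mvneg_mvneg] at s3
  have s4 := le_trans s2 s3
  have s5 : MVLe (MVSup (oplus c x') c) (MVSup x c) := oplus_le_oplus_right s4 c
  exact le_trans s1 s5

lemma inf_good_step {x x' y y' : A} (hx : oplus x x' = x) (hy : oplus y y' = y) :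
    oplus (MVInf x y) (MVInf x' y') = MVInf x y := by
  refine le_antisymm (le_inf ?_ ?_) (le_oplus_right _ _)
  · have h := oplus_le_oplus (inf_le_left x y) (inf_le_left x' y')
    rw [hx] at h; exact h
  · have h := oplus_le_oplus (inf_le_right x y) (inf_le_right x' y')
    rw [hy] at h; exact h

lemma sup_good_step {x x' y y' : A} (hx : oplus x x' = x) (hy : oplus y y' = y) :
    oplus (MVSup x y) (MVSup x' y') = MVSup x y := by
  have hb : MVLe (oplus (MVSup x y) y') (MVSup x y) := by
    have h := good_step_le hy (MVSup x y)
    have e : MVSup y (MVSup x y) = MVSup x y := sup_eq_of_le (le_sup_right x y)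
    rw [e] at h; exact h
  have ht : oplus x (odot x' (mvneg y')) = x := absorb hx (odot_le_left _ _)
  have ha : MVLe (oplus (MVSup x y) (odot x' (mvneg y'))) (MVSup x y) := by
    have h := good_step_le ht (MVSup x y)
    have e : MVSup x (MVSup x y) = MVSup x y := sup_eq_of_le (le_sup_left x y)
    rw [e] at h; exact h
  refine le_antisymm ?_ (le_oplus_right (MVSup x y) _)
  have e : oplus (MVSup x y) (MVSup x' y')
      = oplus (oplus (MVSup x y) y') (odot x' (mvneg y')) := by
    conv_lhs => rw [show MVSup x' y' = oplus (odot x' (mvneg y')) y' from rfl]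
    rw [oplus_comm (odot x' (mvneg y')) y', oplus_assoc]
  rw [e]
  exact le_trans (oplus_le_oplus_right hb (odot x' (mvneg y'))) ha

lemma inf_zero_zero : MVInf (0:A) 0 = 0 :=
  le_zero_eq (inf_le_left 0 0)

lemma sup_zero_zero : MVSup (0:A) 0 = 0 :=
  le_zero_eq (sup_le (le_refl 0) (le_refl 0))

end MVAux

/-- For good sequences `a`, `b`, the componentwise infimum and supremum are again
good sequences, and they are respectively the infimum and the supremum of `a` and
`b` for the pointwise partial order (`a ≤ b` iff `aᵢ ≤ bᵢ` for all `i`). -/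
theorem good_sequences_lattice (A : Type*) [MVAlgebra A]
    (a b : ℕ → A) (ha : Good a) (hb : Good b) :
    Good (fun i => MVInf (a i) (b i)) ∧ Good (fun i => MVSup (a i) (b i)) ∧
    (∀ i, MVLe (MVInf (a i) (b i)) (a i)) ∧
    (∀ i, MVLe (MVInf (a i) (b i)) (b i)) ∧
    (∀ c : ℕ → A, Good c → (∀ i, MVLe (c i) (a i)) → (∀ i, MVLe (c i) (b i)) →
      ∀ i, MVLe (c i) (MVInf (a i) (b i))) ∧
    (∀ i, MVLe (a i) (MVSup (a i) (b i))) ∧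
    (∀ i, MVLe (b i) (MVSup (a i) (b i))) ∧
    (∀ c : ℕ → A, Good c → (∀ i, MVLe (a i) (c i)) → (∀ i, MVLe (b i) (c i)) →
      ∀ i, MVLe (MVSup (a i) (b i)) (c i)) := by
  obtain ⟨ha1, Na, ha2⟩ := ha
  obtain ⟨hb1, Nb, hb2⟩ := hb
  refine ⟨⟨fun i => MVAux.inf_good_step (ha1 i) (hb1 i),
      ⟨max Na Nb, fun m hm => ?_⟩⟩,
    ⟨fun i => MVAux.sup_good_step (ha1 i) (hb1 i),
      ⟨max Na Nb, fun m hm => ?_⟩⟩,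
    fun i => MVAux.inf_le_left _ _,
    fun i => MVAux.inf_le_right _ _,
    fun c _ h1 h2 i => MVAux.le_inf (h1 i) (h2 i),
    fun i => MVAux.le_sup_left _ _,
    fun i => MVAux.le_sup_right _ _,
    fun c _ h1 h2 i => MVAux.sup_le (h1 i) (h2 i)⟩
  · show MVInf (a m) (b m) = 0
    rw [ha2 m (le_trans (le_max_left Na Nb) hm), hb2 m (le_trans (le_max_right Na Nb) hm)]
    exact MVAux.inf_zero_zero
  · show MVSup (a m) (b m) = 0
    rw [ha2 m (le_trans (le_max_left Na Nb) hm), hb2 m (le_trans (le_max_right Na Nb) hm)]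
    exact MVAux.sup_zero_zero
end

section
/- Let G be an abelian ℓ-group with strong unit u. The map sending a good sequence (a₁, …, aₙ) with values in the unit interval [0,u] to the element a₁ + … + aₙ of the positive cone G⁺ is a monoid homomorphism from the monoid of good sequences of the MV-algebra Γ(G) = [0,u] to (G⁺, +) which moreover preserves inf and sup, and it is bijective. -/
/-- A good sequence with values in the unit interval `[0,u]` of an abelian
ℓ-group: `0 ≤ sᵢ ≤ u`, `sᵢ ⊕ sᵢ₊₁ = sᵢ` (where `x ⊕ y = inf(u, x+y)`), and
eventually zero. -/
def GoodI {G : Type*} [Lattice G] [AddCommGroup G] (u : G) (s : ℕ → G) : Prop :=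
  (∀ i, 0 ≤ s i ∧ s i ≤ u) ∧ (∀ i, u ⊓ (s i + s (i + 1)) = s i) ∧
    ∃ N, ∀ m, N ≤ m → s m = 0

/-- The sum of good sequences in the MV-algebra `[0,u]`:
`(a + b)ₙ = aₙ ⊕ (aₙ₋₁ ⊙ b₀) ⊕ … ⊕ (a₀ ⊙ bₙ₋₁) ⊕ bₙ`, where
`x ⊕ y = inf(u, x+y)`, `¬x = u - x` and `x ⊙ y = ¬(¬x ⊕ ¬y)`. -/
def addGoodI {G : Type*} [Lattice G] [AddCommGroup G] (u : G) (a b : ℕ → G) :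
    ℕ → G := fun n =>
  ((List.range n).map
      (fun j => u - (u ⊓ ((u - a (n - 1 - j)) + (u - b j))))).foldr
    (fun p q => u ⊓ (p + q)) (u ⊓ (a n + b n))


set_option linter.unusedSectionVars false
set_option linter.unusedVariables false
set_option maxHeartbeats 1000000

namespace MundiciAux

variable {G : Type*} [Lattice G] [AddCommGroup G] [CovariantClass G G (· + ·) (· ≤ ·)]

-- ==== aux (assume aux.lean contents pasted before in final file) ====
-- for modular dev, just paste aux again:
lemma sum_nonneg' (s : Finset ℕ) (f : ℕ → G) (h : ∀ i ∈ s, 0 ≤ f i) :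
    0 ≤ ∑ i ∈ s, f i := by
  induction s using Finset.cons_induction with
  | empty => simp
  | cons a s ha ih =>
      rw [Finset.sum_cons]
      exact add_nonneg (h a (Finset.mem_cons_self a s))
        (ih fun i hi => h i (Finset.mem_cons_of_mem hi))

lemma nsmul_nonneg' {u : G} (hu : 0 ≤ u) (n : ℕ) : 0 ≤ n • u := by
  induction n with
  | zero => simp
  | succ n ih =>
      rw [succ_nsmul]
      exact add_nonneg ih hu

lemma nsmul_mono {u : G} (hu : 0 ≤ u) {n m : ℕ} (h : n ≤ m) : n • u ≤ m • u := by
  calc n • u ≤ n • u + (m - n) • u := le_add_of_nonneg_right (nsmul_nonneg' hu _)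
  _ = (n + (m - n)) • u := (add_nsmul u n (m-n)).symm
  _ = m • u := by rw [Nat.add_sub_cancel' h]

lemma add_inf_zero {x y z : G} (hx : 0 ≤ x) (hy : 0 ≤ y) (hz : 0 ≤ z)
    (h1 : x ⊓ z = 0) (h2 : y ⊓ z = 0) : (x + y) ⊓ z = 0 := by
  apply le_antisymm
  · have e1 : (x + y) ⊓ z ≤ (x + y) ⊓ (z + y) :=
      inf_le_inf_left _ (le_add_of_nonneg_right hy)
    have e2 : (x + y) ⊓ (z + y) = x ⊓ z + y := by rw [inf_add]
    have e3 : (x + y) ⊓ z ≤ y := by rw [e2, h1, zero_add] at e1; exact e1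
    calc (x + y) ⊓ z ≤ y ⊓ z := le_inf e3 inf_le_right
    _ = 0 := h2
  · exact le_inf (add_nonneg hx hy) hz

lemma inf_zero_of_le {w y z : G} (h0 : 0 ≤ w) (hz : 0 ≤ z) (hwy : w ≤ y)
    (h : y ⊓ z = 0) : w ⊓ z = 0 :=
  le_antisymm (by calc w ⊓ z ≤ y ⊓ z := inf_le_inf_right z hwy
                 _ = 0 := h) (le_inf h0 hz)

lemma sum_inf_zero {z : G} (hz : 0 ≤ z) (s : Finset ℕ) (f : ℕ → G)
    (h0 : ∀ i ∈ s, 0 ≤ f i) (h : ∀ i ∈ s, f i ⊓ z = 0) :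
    (∑ i ∈ s, f i) ⊓ z = 0 := by
  induction s using Finset.cons_induction with
  | empty => rw [Finset.sum_empty]; exact inf_eq_left.2 hz
  | cons a s ha ih =>
      rw [Finset.sum_cons]
      exact add_inf_zero (h0 a (Finset.mem_cons_self a s))
        (sum_nonneg' _ _ fun i hi => h0 i (Finset.mem_cons_of_mem hi)) hz
        (h a (Finset.mem_cons_self a s))
        (ih (fun i hi => h0 i (Finset.mem_cons_of_mem hi))
            (fun i hi => h i (Finset.mem_cons_of_mem hi)))

lemma pos_neg_inf (x : G) : (x ⊔ 0) ⊓ (-x ⊔ 0) = 0 := by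
  have h1 : x + (-x ⊔ 0) = x ⊔ 0 := by
    rw [add_sup, add_neg_cancel, add_zero, sup_comm]
  have h2 : (x ⊔ 0) ⊓ (-x ⊔ 0) = (x + (-x ⊔ 0)) ⊓ (0 + (-x ⊔ 0)) := by
    rw [h1, zero_add]
  have h3 : -x ⊔ 0 = -(x ⊓ 0) := by rw [neg_inf, neg_zero]
  rw [h2, ← inf_add, h3]
  abel

lemma inf_sub_identity (u x y : G) : (u - x) ⊓ y + x = u ⊓ (x + y) := by
  rw [inf_add, sub_add_cancel, add_comm y x]

lemma dis_of_good {u x y : G} (h : u ⊓ (x + y) = x) : (u - x) ⊓ y = 0 := by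
  have h2 := inf_sub_identity u x y
  rw [h] at h2
  have := add_right_cancel (a := (u - x) ⊓ y) (b := x) (c := 0)
  rw [zero_add] at this
  exact this h2

lemma good_of_dis {u x y : G} (h : (u - x) ⊓ y = 0) : u ⊓ (x + y) = x := by
  have := inf_sub_identity u x y
  rw [h, zero_add] at this
  exact this.symm

-- ==== good sequence lemmas ====
section Good
variable {u : G} {s : ℕ → G}

lemma good_dis (hs : GoodI u s) (i : ℕ) : (u - s i) ⊓ s (i + 1) = 0 :=
  dis_of_good (hs.2.1 i)

lemma good_step (hs : GoodI u s) (i : ℕ) : s (i + 1) ≤ s i := by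
  have hd := good_dis hs i
  have h1 : s (i+1) - (u - s i) ⊓ s (i+1) = (s (i+1) - (u - s i)) ⊔ 0 := by
    rw [sub_inf, sub_self]
  rw [hd, sub_zero] at h1
  rw [h1]
  apply sup_le _ (hs.1 i).1
  have : s (i+1) ≤ u := (hs.1 (i+1)).2
  calc s (i+1) - (u - s i) = s i - (u - s (i+1)) := by abel
  _ ≤ s i := sub_le_self _ (sub_nonneg.2 this)

lemma good_anti (hs : GoodI u s) {i j : ℕ} (h : i ≤ j) : s j ≤ s i := by
  induction j with
  | zero => cases Nat.le_zero.1 h; exact le_refl _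
  | succ j ih =>
      rcases Nat.lt_or_ge i (j+1) with hlt | hge
      · exact le_trans (good_step hs j) (ih (Nat.lt_succ_iff.1 hlt))
      · have : i = j + 1 := le_antisymm h hge
        rw [this]

lemma good_dis' (hs : GoodI u s) {i j : ℕ} (h : i < j) : (u - s i) ⊓ s j = 0 := by
  rw [inf_comm]
  exact inf_zero_of_le (hs.1 j).1 (sub_nonneg.2 (hs.1 i).2) (good_anti hs h)
    (by rw [inf_comm]; exact good_dis hs i)

/-- partial sums of a good sequence: `(∑_{i<M} s i) ⊓ (n•u) = ∑_{i<n} s i` -/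
lemma good_partial_sum (hs : GoodI u s) (hu : 0 ≤ u) {n M : ℕ} (h : n ≤ M) :
    (∑ i ∈ Finset.range M, s i) ⊓ (n • u) = ∑ i ∈ Finset.range n, s i := by
  have hsplit := Finset.sum_range_add_sum_Ico s h
  set σ := ∑ i ∈ Finset.range n, s i with hσ
  set X := ∑ i ∈ Finset.Ico n M, s i with hX
  set Z := ∑ i ∈ Finset.range n, (u - s i) with hZ
  have hZval : σ + Z = n • u := by
    rw [hσ, hZ, ← Finset.sum_add_distrib]
    have : ∀ i ∈ Finset.range n, s i + (u - s i) = u := fun i _ => by abel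
    rw [Finset.sum_congr rfl this, Finset.sum_const, Finset.card_range]
  have hXZ : X ⊓ Z = 0 := by
    rw [hX]
    apply sum_inf_zero
    · rw [hZ]; exact sum_nonneg' _ _ fun i hi => sub_nonneg.2 (hs.1 i).2
    · exact fun i _ => (hs.1 i).1
    · intro i hi
      rw [Finset.mem_Ico] at hi
      rw [hZ]
      rw [inf_comm]
      apply sum_inf_zero (hs.1 i).1
      · exact fun j hj => sub_nonneg.2 (hs.1 j).2
      · intro j hj
        rw [Finset.mem_range] at hj
        exact good_dis' hs (lt_of_lt_of_le hj hi.1)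
  calc (∑ i ∈ Finset.range M, s i) ⊓ (n • u) = (σ + X) ⊓ (σ + Z) := by
        rw [← hsplit, hZval]
  _ = σ + X ⊓ Z := by rw [add_inf]
  _ = σ := by rw [hXZ, add_zero]

lemma good_finsum_eq (hs : GoodI u s) {M : ℕ} (hM : ∀ m, M ≤ m → s m = 0) :
    ∑ᶠ i, s i = ∑ i ∈ Finset.range M, s i := by
  apply finsum_eq_sum_of_support_subset
  intro x hx
  simp only [Finset.coe_range, Set.mem_Iio]
  by_contra hc
  exact hx (hM x (le_of_not_gt hc))

lemma good_finsum_nonneg (hs : GoodI u s) : 0 ≤ ∑ᶠ i, s i := by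
  obtain ⟨N, hN⟩ := hs.2.2
  rw [good_finsum_eq hs hN]
  exact sum_nonneg' _ _ fun i _ => (hs.1 i).1

end Good



-- ==== canonical sequences ====
section Can
variable {u : G}

/-- the canonical good sequence of `g`. -/
def canSeq (u g : G) (n : ℕ) : G := ((g - n • u) ⊓ u) ⊔ 0

lemma inf_zero_right_eq {x : G} (hu : 0 ≤ u) : x ⊓ u ⊓ 0 = x ⊓ 0 := by
  apply le_antisymm
  · exact inf_le_inf_right 0 inf_le_left
  · exact le_inf (le_inf inf_le_left (le_trans inf_le_right hu)) inf_le_right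

/-- `(x ⊓ u) ⊔ 0 = x ⊓ u - x ⊓ 0` for `0 ≤ u` -/
lemma clamp_eq_diff (hu : 0 ≤ u) (x : G) : (x ⊓ u) ⊔ 0 = x ⊓ u - x ⊓ 0 := by
  have h1 : (x ⊓ u) ⊔ 0 - (x ⊓ u) = 0 ⊔ (-(x ⊓ u)) := by
    rw [sup_sub, sub_self, zero_sub]
  have h2 : -(x ⊓ u ⊓ 0) = (0:G) ⊔ (-(x ⊓ u)) := by
    rw [neg_inf (x ⊓ u) 0, neg_zero, sup_comm]
  rw [inf_zero_right_eq hu] at h2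
  have h4 := h1.trans h2.symm
  rw [sub_eq_iff_eq_add] at h4
  rw [h4]
  abel

lemma canSeq_eq_diff (hu : 0 ≤ u) (g : G) (n : ℕ) :
    canSeq u g n = g ⊓ ((n+1) • u) - g ⊓ (n • u) := by
  have h1 : (g - n • u) ⊓ u + n • u = g ⊓ ((n+1) • u) := by
    rw [inf_add, sub_add_cancel, succ_nsmul, add_comm (n • u) u]
  have h2 : (g - n • u) ⊓ 0 + n • u = g ⊓ (n • u) := by
    rw [inf_add, sub_add_cancel, zero_add]
  have := clamp_eq_diff hu (g - n • u)
  rw [canSeq, this]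
  rw [← h1, ← h2]
  abel

lemma canSeq_nonneg (g : G) (n : ℕ) : 0 ≤ canSeq u g n := le_sup_right

lemma canSeq_le (hu : 0 ≤ u) (g : G) (n : ℕ) : canSeq u g n ≤ u :=
  sup_le inf_le_right hu

lemma canSeq_zero_of_le (hu : 0 ≤ u) {g : G} {N : ℕ} (hgN : g ≤ N • u) :
    ∀ m, N ≤ m → canSeq u g m = 0 := by
  intro m hm
  have hx : g - m • u ≤ 0 := sub_nonpos.2 (le_trans hgN (nsmul_mono hu hm))
  have : (g - m • u) ⊓ u ≤ 0 := le_trans inf_le_left hx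
  exact sup_eq_right.2 this

lemma canSeq_good (hu : 0 ≤ u) {g : G} {N : ℕ} (hgN : g ≤ N • u) :
    GoodI u (canSeq u g) := by
  refine ⟨fun i => ⟨canSeq_nonneg g i, canSeq_le hu g i⟩, fun i => ?_, N, canSeq_zero_of_le hu hgN⟩
  apply good_of_dis
  set x := g - i • u with hx
  have e1 : u - canSeq u g i = (u - x ⊓ u) ⊓ (u - 0) := by rw [canSeq, sub_sup]
  have e2 : u - x ⊓ u = (u - x) ⊔ 0 := by rw [sub_inf, sub_self]
  have e3 : u - canSeq u g i ≤ (u - x) ⊔ 0 := by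
    rw [e1, e2]; exact inf_le_left
  have e4 : canSeq u g (i+1) ≤ (x - u) ⊔ 0 := by
    have : g - (i+1) • u = x - u := by rw [hx, succ_nsmul]; abel
    rw [canSeq, this]
    exact sup_le_sup_right inf_le_left 0
  apply le_antisymm
  · calc (u - canSeq u g i) ⊓ canSeq u g (i+1) ≤ ((u - x) ⊔ 0) ⊓ ((x - u) ⊔ 0) :=
        inf_le_inf e3 e4
    _ = 0 := by
        have := pos_neg_inf (u - x)
        rw [neg_sub] at this
        exact this
  · exact le_inf (sub_nonneg.2 (canSeq_le hu g i)) (canSeq_nonneg g (i+1))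

lemma canSeq_sum (hu : 0 ≤ u) {g : G} (hg : 0 ≤ g) {N : ℕ} (hgN : g ≤ N • u)
    {M : ℕ} (hNM : N ≤ M) : ∑ i ∈ Finset.range M, canSeq u g i = g := by
  have h1 : ∀ i ∈ Finset.range M, canSeq u g i
      = g ⊓ ((i+1) • u) - g ⊓ (i • u) := fun i _ => canSeq_eq_diff hu g i
  rw [Finset.sum_congr rfl h1, Finset.sum_range_sub (fun i => g ⊓ (i • u)) M]
  rw [zero_smul, inf_eq_right.2 hg, sub_zero]
  exact inf_eq_left.2 (le_trans hgN (nsmul_mono hu hNM))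

lemma canSeq_finsum (hu : 0 ≤ u) {g : G} (hg : 0 ≤ g) {N : ℕ} (hgN : g ≤ N • u) :
    ∑ᶠ i, canSeq u g i = g := by
  rw [good_finsum_eq (canSeq_good hu hgN) (canSeq_zero_of_le hu hgN)]
  exact canSeq_sum hu hg hgN (le_refl N)

/-- uniqueness: every good sequence is the canonical sequence of its sum -/
lemma good_eq_canSeq (hu : 0 ≤ u) {s : ℕ → G} (hs : GoodI u s) (n : ℕ) :
    s n = canSeq u (∑ᶠ i, s i) n := by
  obtain ⟨N, hN⟩ := hs.2.2
  set M := max (n+1) N with hM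
  have hfin : ∑ᶠ (i : ℕ), s i = ∑ i ∈ Finset.range M, s i := by
    apply good_finsum_eq hs
    intro m hm
    exact hN m (le_trans (le_max_right _ _) hm)
  have h1 : (∑ᶠ i, s i) ⊓ ((n+1) • u) = ∑ i ∈ Finset.range (n+1), s i := by
    rw [hfin]; exact good_partial_sum hs hu (le_max_left _ _)
  have h2 : (∑ᶠ i, s i) ⊓ (n • u) = ∑ i ∈ Finset.range n, s i := by
    rw [hfin]; exact good_partial_sum hs hu (le_trans (Nat.le_succ n) (le_max_left _ _))
  rw [canSeq_eq_diff hu, h1, h2, Finset.sum_range_succ]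
  abel

end Can



-- ==== the MV-sum of good sequences ====
section Key
variable {u : G}

def QQ (u : G) (a b : ℕ → G) (m : ℕ) : G :=
  ∑ j ∈ Finset.range m, ((a (m - 1 - j) + b j - u) ⊔ 0)

def SS (u : G) (a b : ℕ → G) (m : ℕ) : G := a m + b m + QQ u a b m

lemma QQ_nonneg (a b : ℕ → G) (m : ℕ) : 0 ≤ QQ u a b m :=
  sum_nonneg' _ _ fun _ _ => le_sup_right

lemma SS_nonneg {a b : ℕ → G} (ha : ∀ i, 0 ≤ a i) (hb : ∀ i, 0 ≤ b i) (m : ℕ) :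
    0 ≤ SS u a b m :=
  add_nonneg (add_nonneg (ha m) (hb m)) (QQ_nonneg a b m)

lemma shift_good {b : ℕ → G} (hb : GoodI u b) : GoodI u (fun k => b (k+1)) := by
  obtain ⟨N, hN⟩ := hb.2.2
  exact ⟨fun i => hb.1 (i+1), fun i => hb.2.1 (i+1), N, fun m hm => hN (m+1) (le_trans hm (Nat.le_succ m))⟩

/-- reindexing: `QQ u a b (k+1) = QQ u a (b ∘ succ) k + (a k + b 0 - u)⁺` -/
lemma QQ_shift (a b : ℕ → G) (k : ℕ) :
    QQ u a b (k+1) = QQ u a (fun j => b (j+1)) k + ((a k + b 0 - u) ⊔ 0) := by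
  rw [QQ, Finset.sum_range_succ' (fun j => (a (k + 1 - 1 - j) + b j - u) ⊔ 0) k]
  have h1 : ∀ j : ℕ, k + 1 - 1 - (j + 1) = k - 1 - j := fun j => by omega
  have h2 : k + 1 - 1 - 0 = k := by omega
  rw [h2]
  congr 1
  apply Finset.sum_congr rfl
  intro j hj
  rw [h1 j]

/-- the two disjointness helpers for the induction step -/
lemma QQ_b_dis {a b : ℕ → G} (ha : GoodI u a) (hb : GoodI u b) (m : ℕ) :
    (u - b 0) ⊓ QQ u a (fun j => b (j+1)) (m+1) = 0 := by
  rw [inf_comm]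
  apply sum_inf_zero (sub_nonneg.2 (hb.1 0).2)
  · exact fun j _ => le_sup_right
  · intro j hj
    apply inf_zero_of_le le_sup_right (sub_nonneg.2 (hb.1 0).2) _
      (by rw [inf_comm]; exact good_dis' hb (Nat.succ_pos j))
    apply sup_le _ (hb.1 (j+1)).1
    calc a (m + 1 - 1 - j) + b (j+1) - u ≤ u + b (j+1) - u :=
          sub_le_sub_right (add_le_add_left (ha.1 _).2 _) u
    _ = b (j+1) := by abel

/-- The main algebraic step. -/
lemma KStep {α β γ W : G} (hu : 0 ≤ u) (hγ0 : 0 ≤ γ) (hγα : γ ≤ α) (hαu : α ≤ u)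
    (hβ0 : 0 ≤ β) (hβu : β ≤ u) (hαW : α ≤ W)
    (hdis1 : (u - α) ⊓ γ = 0) (hdis2 : (u - β) ⊓ ((W - u) ⊔ 0) = 0) :
    (γ - α + ((α + β - u) ⊔ 0) + W - u) ⊔ 0 = ((γ + β - u) ⊔ 0) + ((W - u) ⊔ 0) := by
  set D := (W - u) ⊔ 0 with hD
  set E := (u - W) ⊔ 0 with hE
  set q := (α + β - u) ⊔ 0 with hq
  have hD0 : 0 ≤ D := le_sup_right
  have hE0 : 0 ≤ E := le_sup_right
  have hq0 : 0 ≤ q := le_sup_right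
  have hED : E ⊓ D = 0 := by
    have := pos_neg_inf (u - W)
    rw [neg_sub] at this
    rw [hE, hD]
    exact this
  have hEγ : E ⊓ γ = 0 := by
    apply inf_zero_of_le hE0 hγ0 _ hdis1
    · exact sup_le (sub_le_sub_left hαW u) (sub_nonneg.2 hαu)
  have hWDE : D - E = W - u := by
    have h2 : E = -((W - u) ⊓ 0) := by rw [neg_inf, neg_zero, neg_sub, hE]
    rw [hD, h2, sub_neg_eq_add, add_comm, inf_add_sup, add_zero]
  -- the lower bound `X₀`
  have hX0 : γ + β - u - E + D ≤ γ - α + q + W - u := by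
    have hqle : α + β - u ≤ q := le_sup_left
    have h := add_le_add_right hqle (γ - α + D - E)
    calc γ + β - u - E + D = γ - α + D - E + (α + β - u) := by abel
    _ ≤ γ - α + D - E + q := h
    _ = γ - α + q + (D - E) := by abel
    _ = γ - α + q + (W - u) := by rw [hWDE]
    _ = γ - α + q + W - u := by abel
  -- step 1 : `D ≤ X₀ ⊔ 0`
  have hs1 : D ≤ (γ + β - u - E + D) ⊔ 0 := by
    rw [← sub_nonpos]
    have e1 : D - ((γ + β - u - E + D) ⊔ 0) = (D - (γ + β - u - E + D)) ⊓ (D - 0) := by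
      rw [sub_sup]
    have e2 : D - (γ + β - u - E + D) = (u - β) + E - γ := by abel
    rw [e1, e2, sub_zero]
    calc ((u - β) + E - γ) ⊓ D ≤ ((u - β) + E) ⊓ D :=
          inf_le_inf_right D (sub_le_self _ hγ0)
    _ = 0 := add_inf_zero (sub_nonneg.2 hβu) hE0 hD0 hdis2 hED
  -- step 2 : `γ + β - u + D ≤ X₀ ⊔ 0`
  have hs2 : γ + β - u + D ≤ (γ + β - u - E + D) ⊔ 0 := by
    rw [← sub_nonpos]
    have e1 : γ + β - u + D - ((γ + β - u - E + D) ⊔ 0)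
        = (γ + β - u + D - (γ + β - u - E + D)) ⊓ (γ + β - u + D - 0) := by
      rw [sub_sup]
    have e2 : γ + β - u + D - (γ + β - u - E + D) = E := by abel
    rw [e1, e2, sub_zero]
    calc E ⊓ (γ + β - u + D) ≤ E ⊓ (γ + D) := by
          apply inf_le_inf_left
          calc γ + β - u + D ≤ γ + u - u + D :=
            add_le_add_left (sub_le_sub_right (add_le_add_right hβu γ) u) D
          _ = γ + D := by abel
    _ = 0 := by
          rw [inf_comm]
          exact add_inf_zero hγ0 hD0 hE0 (by rw [inf_comm]; exact hEγ)
            (by rw [inf_comm]; exact hED)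
  apply le_antisymm
  · -- `X ⊔ 0 ≤ RHS`
    apply sup_le _ (add_nonneg le_sup_right hD0)
    have hqle2 : q ≤ ((γ + β - u) ⊔ 0) + (α - γ) := by
      rw [hq]
      apply sup_le
      · calc α + β - u = (γ + β - u) + (α - γ) := by abel
        _ ≤ ((γ + β - u) ⊔ 0) + (α - γ) := add_le_add_left le_sup_left _
      · exact add_nonneg le_sup_right (sub_nonneg.2 hγα)
    have hWu : W - u ≤ D := le_sup_left
    calc γ - α + q + W - u = (γ - α) + q + (W - u) := by abel
    _ ≤ (γ - α) + (((γ + β - u) ⊔ 0) + (α - γ)) + D := by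
        apply add_le_add _ hWu
        exact add_le_add_right hqle2 _
    _ = ((γ + β - u) ⊔ 0) + D := by abel
  · -- `RHS ≤ X ⊔ 0`
    have hY : (γ + β - u - E + D) ⊔ 0 ≤ (γ - α + q + W - u) ⊔ 0 :=
      sup_le_sup_right hX0 0
    rw [sup_add]
    apply sup_le
    · exact le_trans hs2 hY
    · rw [zero_add]; exact le_trans hs1 hY
end Key



section KeyK
variable {u : G}

/-- THE key identity: `(S_m - u)⁺ = P_m = Q_{m+1}`. -/
lemma keyK (hu : 0 ≤ u) (a : ℕ → G) (ha : GoodI u a) :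
    ∀ (m : ℕ) (b : ℕ → G), GoodI u b → (SS u a b m - u) ⊔ 0 = QQ u a b (m+1) := by
  intro m
  induction m with
  | zero =>
      intro b hb
      have h0 : QQ u a b 0 = 0 := by rw [QQ, Finset.sum_range_zero]
      have h1 : QQ u a b 1 = (a 0 + b 0 - u) ⊔ 0 := by
        rw [QQ, Finset.sum_range_one]
      rw [SS, h0, h1, add_zero]
  | succ m IH =>
      intro b hb
      set b' : ℕ → G := fun j => b (j+1) with hb'def
      have hb' : GoodI u b' := shift_good hb
      have IHb := IH b' hb'
      -- recursion identities
      have hQ1 : QQ u a b (m+1) = QQ u a b' m + ((a m + b 0 - u) ⊔ 0) := QQ_shift a b m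
      have hQ2 : QQ u a b (m+2) = QQ u a b' (m+1) + ((a (m+1) + b 0 - u) ⊔ 0) := QQ_shift a b (m+1)
      have hS : SS u a b (m+1) - u
          = a (m+1) - a m + ((a m + b 0 - u) ⊔ 0) + SS u a b' m - u := by
        rw [SS, hQ1, SS]
        have : b' m = b (m+1) := rfl
        rw [this]
        abel
      -- disjointness inputs
      have hdis2 : (u - b 0) ⊓ ((SS u a b' m - u) ⊔ 0) = 0 := by
        rw [IHb]
        exact QQ_b_dis ha hb m
      have hαW : a m ≤ SS u a b' m := by
        rw [SS]
        calc a m = a m + 0 + 0 := by abel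
        _ ≤ a m + b' m + QQ u a b' m :=
            add_le_add (add_le_add_right (hb'.1 m).1 _) (QQ_nonneg _ _ _)
      have hstep := KStep (u := u) hu (ha.1 (m+1)).1 (good_step ha m) (ha.1 m).2
        (hb.1 0).1 (hb.1 0).2 hαW (good_dis ha m) hdis2
      rw [hS, hstep, hQ2, IHb]
      abel

/-- vanishing of `QQ` -/
lemma QQ_vanish {a b : ℕ → G} (ha : GoodI u a) (hb : GoodI u b)
    {Na Nb : ℕ} (hNa : ∀ m, Na ≤ m → a m = 0) (hNb : ∀ m, Nb ≤ m → b m = 0) :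
    ∀ m, Na + Nb ≤ m → QQ u a b m = 0 := by
  intro m hm
  rw [QQ]
  apply Finset.sum_eq_zero
  intro j hj
  rw [Finset.mem_range] at hj
  rcases Nat.lt_or_ge j Nb with hjNb | hjNb
  · have hind : Na ≤ m - 1 - j := by omega
    rw [hNa _ hind, zero_add]
    exact sup_eq_right.2 (sub_nonpos.2 (hb.1 j).2)
  · rw [hNb _ hjNb, add_zero]
    exact sup_eq_right.2 (sub_nonpos.2 (ha.1 (m - 1 - j)).2)

lemma SS_vanish {a b : ℕ → G} (ha : GoodI u a) (hb : GoodI u b)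
    {Na Nb : ℕ} (hNa : ∀ m, Na ≤ m → a m = 0) (hNb : ∀ m, Nb ≤ m → b m = 0) :
    ∀ m, Na + Nb ≤ m → SS u a b m = 0 := by
  intro m hm
  rw [SS, QQ_vanish ha hb hNa hNb m hm, hNa m (by omega), hNb m (by omega)]
  abel

end KeyK



section AddG
variable {u : G}

lemma inf_absorb (p y : G) (hp : 0 ≤ p) : u ⊓ (p + u ⊓ y) = u ⊓ (p + y) := by
  rw [add_inf, ← inf_assoc, inf_eq_left.mpr (le_add_of_nonneg_left hp : u ≤ p + u)]

lemma fold_eq (c : G) : ∀ (n : ℕ) (f : ℕ → G), (∀ j, j < n → 0 ≤ f j) →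
    ((List.range n).map f).foldr (fun p q => u ⊓ (p + q)) (u ⊓ c)
      = u ⊓ (∑ j ∈ Finset.range n, f j + c) := by
  intro n
  induction n with
  | zero => intro f _; simp
  | succ n ih =>
      intro f hf
      rw [List.range_succ_eq_map, List.map_cons, List.map_map, List.foldr_cons]
      have hcomp : ∀ j, j < n → 0 ≤ (f ∘ Nat.succ) j := fun j hj => hf (j+1) (by omega)
      rw [ih (f ∘ Nat.succ) hcomp]
      have h1 : u ⊓ (f 0 + u ⊓ (∑ j ∈ Finset.range n, (f ∘ Nat.succ) j + c))
          = u ⊓ (f 0 + (∑ j ∈ Finset.range n, (f ∘ Nat.succ) j + c)) :=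
        inf_absorb _ _ (hf 0 (by omega))
      rw [h1]
      congr 1
      rw [Finset.sum_range_succ' f n]
      simp only [Function.comp]
      abel

lemma addGoodI_eq {a b : ℕ → G} (ha : ∀ i, a i ≤ u) (hb : ∀ i, b i ≤ u) (n : ℕ) :
    addGoodI u a b n = u ⊓ SS u a b n := by
  rw [addGoodI]
  have hfun : (fun j => u - (u ⊓ ((u - a (n - 1 - j)) + (u - b j))))
      = fun j => (a (n - 1 - j) + b j - u) ⊔ 0 := by
    funext j
    rw [sub_inf, sub_self]
    have : u - (u - a (n - 1 - j) + (u - b j)) = a (n - 1 - j) + b j - u := by abel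
    rw [this, sup_comm]
  rw [hfun, fold_eq (a n + b n) n _ (fun j _ => le_sup_right)]
  rw [SS, QQ]
  congr 1
  abel

lemma addGoodI_good (hu : 0 ≤ u) {a b : ℕ → G} (ha : GoodI u a) (hb : GoodI u b) :
    GoodI u (addGoodI u a b) := by
  have hau : ∀ i, a i ≤ u := fun i => (ha.1 i).2
  have hbu : ∀ i, b i ≤ u := fun i => (hb.1 i).2
  have ha0 : ∀ i, 0 ≤ a i := fun i => (ha.1 i).1
  have hb0 : ∀ i, 0 ≤ b i := fun i => (hb.1 i).1
  refine ⟨fun i => ?_, fun m => ?_, ?_⟩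
  · rw [addGoodI_eq hau hbu]
    exact ⟨le_inf hu (SS_nonneg ha0 hb0 i), inf_le_left⟩
  · -- middle condition
    rw [addGoodI_eq hau hbu, addGoodI_eq hau hbu]
    apply good_of_dis
    have e1 : u - u ⊓ SS u a b m = (u - SS u a b m) ⊔ 0 := by
      rw [sub_inf, sub_self, sup_comm]
    rw [e1]
    set w := (u - SS u a b m) ⊔ 0 with hw
    have hw0 : 0 ≤ w := le_sup_right
    -- w is disjoint from SS (m+1)
    have hwa : w ⊓ a (m+1) = 0 := by
      apply inf_zero_of_le hw0 (ha0 (m+1)) _ (good_dis ha m)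
      apply sup_le _ (sub_nonneg.2 (hau m))
      apply sub_le_sub_left
      rw [SS]
      calc a m = a m + 0 + 0 := by abel
      _ ≤ a m + b m + QQ u a b m := add_le_add (add_le_add_right (hb0 m) _) (QQ_nonneg _ _ _)
    have hwb : w ⊓ b (m+1) = 0 := by
      apply inf_zero_of_le hw0 (hb0 (m+1)) _ (good_dis hb m)
      apply sup_le _ (sub_nonneg.2 (hbu m))
      apply sub_le_sub_left
      rw [SS]
      calc b m = 0 + b m + 0 := by abel
      _ ≤ a m + b m + QQ u a b m := add_le_add (add_le_add_left (ha0 m) _) (QQ_nonneg _ _ _)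
    have hwq : w ⊓ ((SS u a b m - u) ⊔ 0) = 0 := by
      rw [hw, inf_comm]
      have := pos_neg_inf (SS u a b m - u)
      rw [neg_sub] at this
      exact this
    have hSme : SS u a b (m+1) = a (m+1) + b (m+1) + ((SS u a b m - u) ⊔ 0) := by
      rw [SS, keyK hu a ha m b hb]
    have hdisS : SS u a b (m+1) ⊓ w = 0 := by
      rw [hSme]
      rw [inf_comm] at hwa hwb hwq
      exact add_inf_zero (add_nonneg (ha0 _) (hb0 _)) le_sup_right hw0
        (add_inf_zero (ha0 _) (hb0 _) hw0 hwa hwb) hwq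
    rw [inf_comm]
    apply inf_zero_of_le (le_inf hu (SS_nonneg ha0 hb0 (m+1))) hw0 inf_le_right
    exact hdisS
  · -- eventually zero
    obtain ⟨Na, hNa⟩ := ha.2.2
    obtain ⟨Nb, hNb⟩ := hb.2.2
    refine ⟨Na + Nb, fun m hm => ?_⟩
    rw [addGoodI_eq hau hbu, SS_vanish ha hb hNa hNb m hm]
    exact inf_eq_right.2 hu

lemma addGoodI_sum (hu : 0 ≤ u) {a b : ℕ → G} (ha : GoodI u a) (hb : GoodI u b) :
    ∑ᶠ i, addGoodI u a b i = (∑ᶠ i, a i) + ∑ᶠ i, b i := by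
  have hau : ∀ i, a i ≤ u := fun i => (ha.1 i).2
  have hbu : ∀ i, b i ≤ u := fun i => (hb.1 i).2
  obtain ⟨Na, hNa⟩ := ha.2.2
  obtain ⟨Nb, hNb⟩ := hb.2.2
  set M := Na + Nb with hM
  have hvan : ∀ m, M ≤ m → addGoodI u a b m = 0 := by
    intro m hm
    rw [addGoodI_eq hau hbu, SS_vanish ha hb hNa hNb m hm]
    exact inf_eq_right.2 hu
  rw [good_finsum_eq (addGoodI_good hu ha hb) hvan]
  rw [good_finsum_eq ha (fun m hm => hNa m (by omega)) (M := M)]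
  rw [good_finsum_eq hb (fun m hm => hNb m (by omega)) (M := M)]
  have hterm : ∀ m, addGoodI u a b m = a m + b m + (QQ u a b m - QQ u a b (m+1)) := by
    intro m
    rw [addGoodI_eq hau hbu]
    have h1 : u ⊓ SS u a b m = SS u a b m - ((SS u a b m - u) ⊔ 0) := by
      have : SS u a b m - u ⊓ SS u a b m = (SS u a b m - u) ⊔ 0 := by
        rw [sub_inf, sub_self, sup_comm]
      rw [← this]
      abel
    rw [h1, keyK hu a ha m b hb, SS]
    abel
  rw [Finset.sum_congr rfl (fun m _ => hterm m)]
  rw [Finset.sum_add_distrib, Finset.sum_add_distrib]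
  rw [Finset.sum_range_sub' (fun m => QQ u a b m) M]
  have hQ0 : QQ u a b 0 = 0 := by rw [QQ, Finset.sum_range_zero]
  have hQM : QQ u a b M = 0 := QQ_vanish ha hb hNa hNb M (le_refl M)
  rw [hQ0, hQM]
  abel

end AddG



-- ==== inf and sup of canonical sequences ====
section InfSup
variable {u : G}

lemma canSeq_inf (hu : 0 ≤ u) (g h : G) (n : ℕ) :
    canSeq u g n ⊓ canSeq u h n = canSeq u (g ⊓ h) n := by
  letI : DistribLattice G := AddCommGroup.toDistribLattice G
  set c := n • u with hc
  have hpq : (g - c) ⊓ u ⊓ ((h - c) ⊓ u) = ((g ⊓ h) - c) ⊓ u := by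
    rw [inf_inf_inf_comm, inf_idem, ← inf_sub]
  rw [canSeq, canSeq, canSeq, ← hpq]
  set p := (g - c) ⊓ u with hp
  set q := (h - c) ⊓ u with hq
  apply le_antisymm
  · rw [inf_sup_right, inf_sup_left]
    apply sup_le
    · apply sup_le le_sup_left (le_trans inf_le_right le_sup_right)
    · exact le_trans inf_le_left le_sup_right
  · apply sup_le
    · exact le_inf (le_trans inf_le_left le_sup_left) (le_trans inf_le_right le_sup_left)
    · exact le_inf le_sup_right le_sup_right

lemma canSeq_sup (hu : 0 ≤ u) (g h : G) (n : ℕ) :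
    canSeq u g n ⊔ canSeq u h n = canSeq u (g ⊔ h) n := by
  letI : DistribLattice G := AddCommGroup.toDistribLattice G
  set c := n • u with hc
  have hpq : ((g - c) ⊓ u) ⊔ ((h - c) ⊓ u) = ((g ⊔ h) - c) ⊓ u := by
    rw [← inf_sup_right, ← sup_sub]
  rw [canSeq, canSeq, canSeq, ← hpq]
  rw [sup_sup_sup_comm, sup_idem]

end InfSup


end MundiciAux

open MundiciAux

/-- For an abelian ℓ-group `G` with strong unit `u`, the map sending a good
sequence with values in `[0,u]` to its sum `a₁ + … + aₙ` is a monoid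
homomorphism from the monoid of good sequences of `Γ(G) = [0,u]` to the positive
cone `(G⁺, +)`, it preserves (componentwise) inf and sup, and it is bijective. -/
theorem good_sequences_monoid_iso_positive_cone (G : Type*)
    [Lattice G] [AddCommGroup G] [CovariantClass G G (· + ·) (· ≤ ·)]
    (u : G) (hu : 0 ≤ u) (hstrong : ∀ x : G, ∃ n : ℕ, x ≤ n • u) :
    (∀ s : ℕ → G, GoodI u s → 0 ≤ ∑ᶠ i, s i) ∧
    (∑ᶠ i : ℕ, (0 : G)) = 0 ∧
    (∀ s t : ℕ → G, GoodI u s → GoodI u t → GoodI u (addGoodI u s t)) ∧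
    (∀ s t : ℕ → G, GoodI u s → GoodI u t →
      (∑ᶠ i, addGoodI u s t i) = (∑ᶠ i, s i) + ∑ᶠ i, t i) ∧
    (∀ s t : ℕ → G, GoodI u s → GoodI u t →
      (∑ᶠ i, (s i ⊓ t i)) = (∑ᶠ i, s i) ⊓ ∑ᶠ i, t i) ∧
    (∀ s t : ℕ → G, GoodI u s → GoodI u t →
      (∑ᶠ i, (s i ⊔ t i)) = (∑ᶠ i, s i) ⊔ ∑ᶠ i, t i) ∧
    (∀ s t : ℕ → G, GoodI u s → GoodI u t →
      (∑ᶠ i, s i) = (∑ᶠ i, t i) → s = t) ∧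
    (∀ g : G, 0 ≤ g → ∃ s : ℕ → G, GoodI u s ∧ (∑ᶠ i, s i) = g) := by
  refine ⟨?_, ?_, ?_, ?_, ?_, ?_, ?_, ?_⟩
  · exact fun s hs => good_finsum_nonneg hs
  · exact finsum_zero
  · exact fun s t hs ht => addGoodI_good hu hs ht
  · exact fun s t hs ht => addGoodI_sum hu hs ht
  · -- inf
    intro s t hs ht
    obtain ⟨Ng, hNg⟩ := hstrong (∑ᶠ i, s i)
    obtain ⟨Nh, hNh⟩ := hstrong (∑ᶠ i, t i)
    have hg0 := good_finsum_nonneg hs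
    have ht0 := good_finsum_nonneg ht
    have h1 : ∀ n, s n ⊓ t n = canSeq u ((∑ᶠ i, s i) ⊓ ∑ᶠ i, t i) n := by
      intro n
      rw [good_eq_canSeq hu hs n, good_eq_canSeq hu ht n]
      exact canSeq_inf hu _ _ n
    calc ∑ᶠ n, (s n ⊓ t n) = ∑ᶠ n, canSeq u ((∑ᶠ i, s i) ⊓ ∑ᶠ i, t i) n := by
          exact finsum_congr h1
    _ = (∑ᶠ i, s i) ⊓ ∑ᶠ i, t i := by
          apply canSeq_finsum hu (le_inf hg0 ht0) (N := Ng)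
          exact le_trans inf_le_left hNg
  · -- sup
    intro s t hs ht
    obtain ⟨Ng, hNg⟩ := hstrong (∑ᶠ i, s i)
    obtain ⟨Nh, hNh⟩ := hstrong (∑ᶠ i, t i)
    have hg0 := good_finsum_nonneg hs
    have ht0 := good_finsum_nonneg ht
    have h1 : ∀ n, s n ⊔ t n = canSeq u ((∑ᶠ i, s i) ⊔ ∑ᶠ i, t i) n := by
      intro n
      rw [good_eq_canSeq hu hs n, good_eq_canSeq hu ht n]
      exact canSeq_sup hu _ _ n
    calc ∑ᶠ n, (s n ⊔ t n) = ∑ᶠ n, canSeq u ((∑ᶠ i, s i) ⊔ ∑ᶠ i, t i) n := by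
          exact finsum_congr h1
    _ = (∑ᶠ i, s i) ⊔ ∑ᶠ i, t i := by
          apply canSeq_finsum hu (le_trans hg0 le_sup_left) (N := Ng + Nh)
          apply sup_le
          · exact le_trans hNg (nsmul_mono hu (by omega))
          · exact le_trans hNh (nsmul_mono hu (by omega))
  · -- injectivity
    intro s t hs ht hsum
    funext n
    rw [good_eq_canSeq hu hs n, good_eq_canSeq hu ht n, hsum]
  · -- surjectivity
    intro g hg
    obtain ⟨N, hN⟩ := hstrong g
    exact ⟨canSeq u g, canSeq_good hu hN, canSeq_finsum hu hg hN⟩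
end
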